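/- arXiv:2308.14558 — 3 statements merged into one kernel-verified Lean document; each statement's English description precedes it below -/
import Mathlib

section
/- Let r ≥ 1 and let R = {v ∈ ℤ² : 0 < d_∞(v, 0) ≤ r}, where d_∞((i₁,j₁),(i₂,j₂)) = max{|i₁−i₂|, |j₁−j₂|}. Then for every q ≥ 2, the supremum of R_q(X) over all R-recoverable systems X on ℤ² over alphabets of size q equals 1 − 1/(r+1)². -/
/-- An `R`-recoverable system on `ℤ²`: every symbol `x_v` is a function of the
symbols in positions `v + R`. -/
def IsRecoverable2 {Q : Type*} (R : Set (ℤ × ℤ)) (X : Set (ℤ × ℤ → Q)) : Prop :=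
  ∀ v : ℤ × ℤ, ∃ f : (ℤ × ℤ → Q) → Q,
    (∀ x y : ℤ × ℤ → Q, (∀ u ∈ R, x (v + u) = y (v + u)) → f x = f y) ∧
    ∀ x ∈ X, f x = x v

/-- `|B_{[n]²}(X)|`: restrictions of elements of `X` to `{0,…,n−1}²`. -/
noncomputable def blockCount2 {Q : Type*} (X : Set (ℤ × ℤ → Q)) (n : ℕ) : ℕ :=
  Nat.card ↥((fun x : ℤ × ℤ → Q =>
    fun p : Fin n × Fin n => x (((p.1 : ℕ) : ℤ), ((p.2 : ℕ) : ℤ))) '' X)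

/-- The rate `R_q(X) = limsup_{n→∞} (1/n²) log_q |B_{[n]²}(X)|`. -/
noncomputable def rate2 (q : ℕ) {Q : Type*} (X : Set (ℤ × ℤ → Q)) : ℝ :=
  Filter.limsup (fun n : ℕ => Real.logb q (blockCount2 X n) / ((n : ℝ) ^ 2)) Filter.atTop

open Finset

lemma aux_div_bounds (S v : ℤ) (hS : 0 < S) : S * (v / S) ≤ v ∧ v < S * (v / S) + S := by
  have h := Int.mul_ediv_add_emod v S
  have h1 := Int.emod_nonneg v (by omega : S ≠ 0)
  have h2 := Int.emod_lt_of_pos v hS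
  omega

lemma aux_ediv (S a i : ℤ) (hS : 0 < S) (h1 : 0 ≤ i) (h2 : i < S) : (S * a + i) / S = a := by
  rw [add_comm, Int.add_mul_ediv_left _ _ (by omega : S ≠ 0),
    Int.ediv_eq_zero_of_lt h1 h2, zero_add]

lemma aux_ediv' (S a w : ℤ) (hS : 0 < S) (h1 : S * a ≤ w) (h2 : w < S * a + S) : w / S = a := by
  have : w = S * a + (w - S * a) := by ring
  rw [this, aux_ediv S a _ hS (by omega) (by omega)]

lemma aux_tile_split {Q : Type*} [AddCommMonoid Q] (s : ℕ) (x : ℤ × ℤ → Q) (A B : ℤ)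
    (w : ℤ × ℤ) (h1 : A ≤ w.1) (h2 : w.1 < A + s) (h3 : B ≤ w.2) (h4 : w.2 < B + s) :
    ∑ p ∈ range s ×ˢ range s, x (A + (p.1 : ℤ), B + (p.2 : ℤ)) =
      x w + ∑ p ∈ (range s ×ˢ range s).filter
        (fun p => (A + (p.1 : ℤ), B + (p.2 : ℤ)) ≠ w), x (A + (p.1 : ℤ), B + (p.2 : ℤ)) := by
  set p₀ : ℕ × ℕ := ((w.1 - A).toNat, (w.2 - B).toNat) with hp₀def
  have hp₀ : p₀ ∈ range s ×ˢ range s := by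
    simp only [hp₀def, mem_product, mem_range]
    omega
  have hcell : (A + ((p₀.1 : ℕ) : ℤ), B + ((p₀.2 : ℕ) : ℤ)) = w := by
    have e1 : ((w.1 - A).toNat : ℤ) = w.1 - A := Int.toNat_of_nonneg (by omega)
    have e2 : ((w.2 - B).toNat : ℤ) = w.2 - B := Int.toNat_of_nonneg (by omega)
    simp only [hp₀def]
    ext <;> simp <;> omega
  have hfilter : (range s ×ˢ range s).filter
      (fun p => (A + (p.1 : ℤ), B + (p.2 : ℤ)) ≠ w) = (range s ×ˢ range s).erase p₀ := by
    ext p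
    simp only [mem_filter, mem_erase, mem_product, mem_range, Prod.ext_iff, ne_eq]
    constructor
    · rintro ⟨⟨hq1, hq2⟩, hne⟩
      refine ⟨fun hp => hne ?_, hq1, hq2⟩
      have := Prod.ext_iff.mp hcell
      simp only [hp₀def] at this
      obtain ⟨e1, e2⟩ := this
      obtain ⟨f1, f2⟩ := hp
      rw [f1, f2]
      exact ⟨e1, e2⟩
    · rintro ⟨hne, hq1, hq2⟩
      refine ⟨⟨hq1, hq2⟩, fun hc => hne ?_⟩
      have e1 : ((w.1 - A).toNat : ℤ) = w.1 - A := Int.toNat_of_nonneg (by omega)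
      have e2 : ((w.2 - B).toNat : ℤ) = w.2 - B := Int.toNat_of_nonneg (by omega)
      obtain ⟨hc1, hc2⟩ := hc
      constructor <;> (simp only [hp₀def]; omega)
  rw [hfilter, ← Finset.add_sum_erase _ _ hp₀, hcell]

/-- The tiled parity-check system. -/
def recX (q s : ℕ) : Set (ℤ × ℤ → ZMod q) :=
  {x | ∀ a b : ℤ, ∑ p ∈ range s ×ˢ range s,
    x (((s : ℕ) : ℤ) * a + (p.1 : ℤ), ((s : ℕ) : ℤ) * b + (p.2 : ℤ)) = 0}

lemma recX_recoverable (r q : ℕ) (hr : 1 ≤ r) :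
    IsRecoverable2 {v : ℤ × ℤ | v ≠ 0 ∧ max |v.1| |v.2| ≤ (r : ℤ)} (recX q (r + 1)) := by
  intro v
  set s : ℕ := r + 1 with hs
  set S : ℤ := ((s : ℕ) : ℤ) with hS
  have hS0 : 0 < S := by rw [hS]; exact_mod_cast Nat.succ_pos r
  obtain ⟨ha1, ha2⟩ := aux_div_bounds S v.1 hS0
  obtain ⟨hb1, hb2⟩ := aux_div_bounds S v.2 hS0
  set a : ℤ := v.1 / S with ha
  set b : ℤ := v.2 / S with hb
  refine ⟨fun x => - ∑ p ∈ (range s ×ˢ range s).filter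
      (fun p => (S * a + (p.1 : ℤ), S * b + (p.2 : ℤ)) ≠ v),
      x (S * a + (p.1 : ℤ), S * b + (p.2 : ℤ)), ?_, ?_⟩
  · intro x y hxy
    refine neg_inj.mpr (Finset.sum_congr rfl fun p hp => ?_)
    simp only [mem_filter, mem_product, mem_range] at hp
    obtain ⟨⟨hp1, hp2⟩, hpne⟩ := hp
    set u : ℤ × ℤ := (S * a + (p.1 : ℤ) - v.1, S * b + (p.2 : ℤ) - v.2) with hu
    have hcell : (S * a + (p.1 : ℤ), S * b + (p.2 : ℤ)) = v + u := by
      simp only [hu, Prod.ext_iff, Prod.fst_add, Prod.snd_add]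
      constructor <;> ring
    have hmem : u ∈ {v : ℤ × ℤ | v ≠ 0 ∧ max |v.1| |v.2| ≤ (r : ℤ)} := by
      constructor
      · intro h0
        apply hpne
        rw [hcell, h0, add_zero]
      · have hp1' : (p.1 : ℤ) < S := by rw [hS]; exact_mod_cast hp1
        have hp2' : (p.2 : ℤ) < S := by rw [hS]; exact_mod_cast hp2
        have hrS : S = (r : ℤ) + 1 := by rw [hS, hs]; push_cast; ring
        simp only [hu, max_le_iff, abs_le]
        omega
    rw [hcell]
    exact hxy u hmem
  · intro x hx
    have hsum := hx a b
    have hsplit := aux_tile_split s x (S * a) (S * b) v ha1 (by omega) hb1 (by omega)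
    rw [hsplit] at hsum
    exact neg_eq_of_add_eq_zero_left hsum

lemma upper_blockCount {Q : Type} [Fintype Q] (r q n : ℕ) (hr : 1 ≤ r) (hq1 : 1 ≤ q)
    (hcard : Fintype.card Q = q)
    (X : Set (ℤ × ℤ → Q))
    (hX : IsRecoverable2 {v : ℤ × ℤ | v ≠ 0 ∧ max |v.1| |v.2| ≤ (r : ℤ)} X) :
    blockCount2 X n ≤ q ^ (n * n - (n / (r + 1) - 1) * (n / (r + 1) - 1)) := by
  classical
  set s : ℕ := r + 1 with hs
  set M : ℕ := n / s - 1 with hM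
  set D : Finset (Fin n × Fin n) := Finset.univ.filter
    (fun p : Fin n × Fin n => s ∣ (p.1 : ℕ) ∧ s ∣ (p.2 : ℕ) ∧ r ≤ (p.1 : ℕ) ∧
      (p.1 : ℕ) + r < n ∧ r ≤ (p.2 : ℕ) ∧ (p.2 : ℕ) + r < n) with hD
  -- Step A : M * M ≤ D.card
  have stepA : M * M ≤ D.card := by
    rcases Nat.eq_zero_or_pos M with h0 | hMpos
    · rw [h0]; exact Nat.zero_le _
    · have hn2 : 2 * s ≤ n := by
        have : 2 ≤ n / s := by omega
        calc 2 * s ≤ (n / s) * s := Nat.mul_le_mul_right s this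
        _ ≤ n := Nat.div_mul_le_self n s
      have hn0 : 0 < n := by omega
      have key : ∀ c : ℕ, c < M → (c + 1) * s + s ≤ n := by
        intro c hc
        have h1 : (c + 1) + 1 ≤ n / s := by omega
        have h2 : ((c + 1) + 1) * s ≤ (n / s) * s := Nat.mul_le_mul_right s h1
        have h3 : (n / s) * s ≤ n := Nat.div_mul_le_self n s
        calc (c+1) * s + s = ((c+1)+1) * s := by ring
        _ ≤ n := le_trans h2 h3
      have hmod : ∀ c : ℕ, c < M → (c + 1) * s % n = (c + 1) * s := by
        intro c hc
        exact Nat.mod_eq_of_lt (by have := key c hc; omega)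
      calc M * M = ((range M) ×ˢ (range M)).card := by
            rw [Finset.card_product, Finset.card_range]
      _ ≤ D.card := by
        apply Finset.card_le_card_of_injOn
          (fun c => ((⟨(c.1 + 1) * s % n, Nat.mod_lt _ hn0⟩ : Fin n),
            (⟨(c.2 + 1) * s % n, Nat.mod_lt _ hn0⟩ : Fin n)))
        · intro c hc
          simp only [Finset.coe_product, Set.mem_prod, Finset.mem_coe, mem_range] at hc
          obtain ⟨hc1, hc2⟩ := hc
          have k1 := key c.1 hc1
          have k2 := key c.2 hc2
          simp only [Finset.mem_coe, hD, Finset.mem_filter, Finset.mem_univ, true_and,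
            hmod c.1 hc1, hmod c.2 hc2]
          refine ⟨dvd_mul_left s (c.1+1), dvd_mul_left s (c.2+1), ?_, ?_, ?_, ?_⟩ <;> nlinarith [Nat.one_le_iff_ne_zero.mpr (by omega : s ≠ 0)]
        · intro c hc d hd hcd
          simp only [Finset.coe_product, Set.mem_prod, Finset.mem_coe, mem_range] at hc hd
          have e1 : (c.1 + 1) * s % n = (d.1 + 1) * s % n := by
            exact congrArg (fun z => (z.1 : ℕ)) hcd
          have e2 : (c.2 + 1) * s % n = (d.2 + 1) * s % n := by
            exact congrArg (fun z => (z.2 : ℕ)) hcd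
          rw [hmod c.1 hc.1, hmod d.1 hd.1] at e1
          rw [hmod c.2 hc.2, hmod d.2 hd.2] at e2
          have hs0 : 0 < s := by omega
          have : c.1 = d.1 := by
            have := Nat.eq_of_mul_eq_mul_right hs0 e1; omega
          have h2 : c.2 = d.2 := by
            have := Nat.eq_of_mul_eq_mul_right hs0 e2; omega
          exact Prod.ext this h2
  -- Step B : blockCount2 X n ≤ q ^ (n * n - D.card)
  have stepB : blockCount2 X n ≤ q ^ (n * n - D.card) := by
    set E : Finset (Fin n × Fin n) := Finset.univ \ D with hE
    set π : (ℤ × ℤ → Q) → (Fin n × Fin n → Q) :=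
      (fun x : ℤ × ℤ → Q => fun p : Fin n × Fin n => x (((p.1 : ℕ) : ℤ), ((p.2 : ℕ) : ℤ)))
      with hπ
    have key : ∀ x ∈ X, ∀ y ∈ X,
        (∀ p : Fin n × Fin n, p ∉ D → π x p = π y p) →
        ∀ p : Fin n × Fin n, π x p = π y p := by
      intro x hx y hy hagree p
      by_cases hpD : p ∈ D
      swap
      · exact hagree p hpD
      simp only [hD, Finset.mem_filter, Finset.mem_univ, true_and] at hpD
      obtain ⟨hd1, hd2, hr1, hr2, hr3, hr4⟩ := hpD
      set v : ℤ × ℤ := (((p.1 : ℕ) : ℤ), ((p.2 : ℕ) : ℤ)) with hv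
      obtain ⟨f, hloc, hval⟩ := hX v
      have hxy : f x = f y := by
        apply hloc
        intro u hu
        obtain ⟨hu0, humax⟩ := hu
        rw [max_le_iff, abs_le, abs_le] at humax
        have hb1 : (r : ℤ) ≤ ((p.1 : ℕ) : ℤ) := by exact_mod_cast hr1
        have hb2 : ((p.1 : ℕ) : ℤ) + r < n := by exact_mod_cast hr2
        have hb3 : (r : ℤ) ≤ ((p.2 : ℕ) : ℤ) := by exact_mod_cast hr3
        have hb4 : ((p.2 : ℕ) : ℤ) + r < n := by exact_mod_cast hr4
        set i' : ℕ := (((p.1 : ℕ) : ℤ) + u.1).toNat with hi'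
        set j' : ℕ := (((p.2 : ℕ) : ℤ) + u.2).toNat with hj'
        have hi1 : ((i' : ℕ) : ℤ) = ((p.1 : ℕ) : ℤ) + u.1 := by
          rw [hi']; exact Int.toNat_of_nonneg (by omega)
        have hj1 : ((j' : ℕ) : ℤ) = ((p.2 : ℕ) : ℤ) + u.2 := by
          rw [hj']; exact Int.toNat_of_nonneg (by omega)
        have hi2 : i' < n := by omega
        have hj2 : j' < n := by omega
        set p' : Fin n × Fin n := (⟨i', hi2⟩, ⟨j', hj2⟩) with hp'
        have hp'D : p' ∉ D := by
          intro hmem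
          simp only [hD, Finset.mem_filter, Finset.mem_univ, true_and, hp'] at hmem
          obtain ⟨he1, he2, _⟩ := hmem
          have hdvd1 : (s : ℤ) ∣ (i' : ℤ) := Int.natCast_dvd_natCast.mpr he1
          have hdvd2 : (s : ℤ) ∣ (j' : ℤ) := Int.natCast_dvd_natCast.mpr he2
          have hdvd1' : (s : ℤ) ∣ ((p.1 : ℕ) : ℤ) := Int.natCast_dvd_natCast.mpr hd1
          have hdvd2' : (s : ℤ) ∣ ((p.2 : ℕ) : ℤ) := Int.natCast_dvd_natCast.mpr hd2
          rw [hi1] at hdvd1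
          rw [hj1] at hdvd2
          have du1 : (s : ℤ) ∣ u.1 := (dvd_add_right hdvd1').mp hdvd1
          have du2 : (s : ℤ) ∣ u.2 := (dvd_add_right hdvd2').mp hdvd2
          have hu1z : u.1 = 0 := Int.eq_zero_of_abs_lt_dvd du1
            (by rw [abs_lt]; push_cast [hs]; omega)
          have hu2z : u.2 = 0 := Int.eq_zero_of_abs_lt_dvd du2
            (by rw [abs_lt]; push_cast [hs]; omega)
          exact hu0 (Prod.ext hu1z hu2z)
        have hvu : v + u = (((p'.1 : ℕ) : ℤ), ((p'.2 : ℕ) : ℤ)) := by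
          rw [Prod.ext_iff]
          simp only [hv, hp', Prod.fst_add, Prod.snd_add]
          exact ⟨hi1.symm, hj1.symm⟩
        rw [hvu]
        exact hagree p' hp'D
      have h1 := hval x hx
      have h2 := hval y hy
      show x v = y v
      rw [← h1, ← h2, hxy]
    have Finj : Function.Injective
        (fun b : ↥(π '' X) => (fun p : ↥E => b.1 ↑p : ↥E → Q)) := by
      intro b1 b2 h
      apply Subtype.ext
      obtain ⟨x, hx, hbx⟩ := b1.2
      obtain ⟨y, hy, hby⟩ := b2.2
      rw [← hbx, ← hby]
      funext p
      apply key x hx y hy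
      · intro p' hp'
        have hmem : p' ∈ E := by
          rw [hE, Finset.mem_sdiff]
          exact ⟨Finset.mem_univ _, hp'⟩
        have := congrFun h ⟨p', hmem⟩
        simpa [hbx, hby] using this
    have hcount : blockCount2 X n ≤ Nat.card (↥E → Q) := by
      rw [blockCount2]
      exact Nat.card_le_card_of_injective _ Finj
    have hcard2 : Nat.card (↥E → Q) = q ^ E.card := by
      rw [Nat.card_eq_fintype_card, Fintype.card_fun, hcard, Fintype.card_coe]
    have hEcard : E.card = n * n - D.card := by
      rw [hE, Finset.card_sdiff_of_subset (Finset.subset_univ D)]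
      congr 1
      simp [Fintype.card_prod]
    rw [hcard2, hEcard] at hcount
    exact hcount
  exact le_trans stepB (Nat.pow_le_pow_right hq1 (Nat.sub_le_sub_left stepA _))

def SS (r : ℕ) : ℤ := ((r + 1 : ℕ) : ℤ)

/-- Absorber cell of the tile with base `(A, B)`. -/
def absb (r n : ℕ) (A B : ℤ) : ℤ × ℤ :=
  if 0 ≤ A ∧ A + r < n ∧ 0 ≤ B ∧ B + r < n then (A, B)
  else if A < 0 then (A, B)
  else if (n : ℤ) ≤ A + r then (A + r, B)
  else if B < 0 then (A, B)
  else (A, B + r)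

lemma absb_mem (r n : ℕ) (A B : ℤ) :
    A ≤ (absb r n A B).1 ∧ (absb r n A B).1 ≤ A + r ∧
      B ≤ (absb r n A B).2 ∧ (absb r n A B).2 ≤ B + r := by
  unfold absb; split_ifs <;> simp <;> omega

lemma absb_in_box (r n : ℕ) (A B : ℤ) (h1 : 0 ≤ (absb r n A B).1)
    (h2 : (absb r n A B).1 < n) (h3 : 0 ≤ (absb r n A B).2) (h4 : (absb r n A B).2 < n) :
    absb r n A B = (A, B) ∧ 0 ≤ A ∧ A + r < n ∧ 0 ≤ B ∧ B + r < n := by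
  unfold absb at *
  split_ifs at * with g1 g2 g3 g4 <;> simp_all <;> omega

def negsum (r q n : ℕ) (h : ℤ × ℤ → ZMod q) (A B : ℤ) : ZMod q :=
  - ∑ p ∈ (range (r + 1) ×ˢ range (r + 1)).filter
      (fun p => (A + (p.1 : ℤ), B + (p.2 : ℤ)) ≠ absb r n A B), h (A + (p.1 : ℤ), B + (p.2 : ℤ))

def xConf (r q n : ℕ) (h : ℤ × ℤ → ZMod q) : ℤ × ℤ → ZMod q := fun v =>
  if v = absb r n (SS r * (v.1 / SS r)) (SS r * (v.2 / SS r))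
  then negsum r q n h (SS r * (v.1 / SS r)) (SS r * (v.2 / SS r))
  else h v

lemma SS_pos (r : ℕ) : 0 < SS r := by
  unfold SS; exact_mod_cast Nat.succ_pos r

lemma xConf_eval (r q n : ℕ) (h : ℤ × ℤ → ZMod q) (a b : ℤ) (w : ℤ × ℤ)
    (h1 : SS r * a ≤ w.1) (h2 : w.1 < SS r * a + SS r)
    (h3 : SS r * b ≤ w.2) (h4 : w.2 < SS r * b + SS r) :
    xConf r q n h w = if w = absb r n (SS r * a) (SS r * b)
      then negsum r q n h (SS r * a) (SS r * b) else h w := by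
  have e1 : w.1 / SS r = a := aux_ediv' _ _ _ (SS_pos r) h1 h2
  have e2 : w.2 / SS r = b := aux_ediv' _ _ _ (SS_pos r) h3 h4
  rw [xConf, e1, e2]

lemma xConf_mem (r q n : ℕ) (h : ℤ × ℤ → ZMod q) : xConf r q n h ∈ recX q (r + 1) := by
  intro a b
  have hSr : ((r + 1 : ℕ) : ℤ) = SS r := rfl
  have hrS : (r : ℤ) < SS r := by unfold SS; push_cast; omega
  obtain ⟨m1, m2, m3, m4⟩ := absb_mem r n (SS r * a) (SS r * b)
  rw [hSr]
  rw [aux_tile_split (r + 1) _ (SS r * a) (SS r * b) (absb r n (SS r * a) (SS r * b))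
    m1 (by push_cast [← hSr] at *; omega) m3 (by push_cast [← hSr] at *; omega)]
  have hterm : ∀ p ∈ (range (r + 1) ×ˢ range (r + 1)).filter
      (fun p => (SS r * a + (p.1 : ℤ), SS r * b + (p.2 : ℤ)) ≠ absb r n (SS r * a) (SS r * b)),
      xConf r q n h (SS r * a + (p.1 : ℤ), SS r * b + (p.2 : ℤ)) =
        h (SS r * a + (p.1 : ℤ), SS r * b + (p.2 : ℤ)) := by
    intro p hp
    rw [mem_filter, mem_product, mem_range, mem_range] at hp
    obtain ⟨⟨hp1, hp2⟩, hpne⟩ := hp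
    have c1 : ((p.1 : ℕ) : ℤ) < SS r := by unfold SS; exact_mod_cast hp1
    have c2 : ((p.2 : ℕ) : ℤ) < SS r := by unfold SS; exact_mod_cast hp2
    rw [xConf_eval r q n h a b _
      (show SS r * a ≤ SS r * a + ((p.1 : ℕ) : ℤ) by omega)
      (show SS r * a + ((p.1 : ℕ) : ℤ) < SS r * a + SS r by omega)
      (show SS r * b ≤ SS r * b + ((p.2 : ℕ) : ℤ) by omega)
      (show SS r * b + ((p.2 : ℕ) : ℤ) < SS r * b + SS r by omega)]
    exact if_neg hpne
  have habs : xConf r q n h (absb r n (SS r * a) (SS r * b)) =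
      negsum r q n h (SS r * a) (SS r * b) := by
    rw [xConf_eval r q n h a b _ m1 (by omega) m3 (by omega), if_pos rfl]
  rw [Finset.sum_congr rfl hterm, habs, negsum, neg_add_cancel]

lemma lower_blockCount (r q n : ℕ) (hr : 1 ≤ r) (hq : 2 ≤ q) :
    q ^ (n * n - (n / (r + 1)) * (n / (r + 1))) ≤ blockCount2 (recX q (r + 1)) n := by
  classical
  haveI : NeZero q := ⟨by omega⟩
  set s : ℕ := r + 1 with hs
  set P : Fin n × Fin n → Prop := fun p =>
    s ∣ (p.1 : ℕ) ∧ s ∣ (p.2 : ℕ) ∧ (p.1 : ℕ) + r < n ∧ (p.2 : ℕ) + r < n with hP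
  set F : Finset (Fin n × Fin n) := Finset.univ.filter (fun p => ¬ P p) with hF
  -- Step A : n * n - (n/s) * (n/s) ≤ F.card
  have stepA : n * n - (n / s) * (n / s) ≤ F.card := by
    have hfull : (Finset.univ.filter P).card ≤ (n / s) * (n / s) := by
      have := Finset.card_le_card_of_injOn
        (s := Finset.univ.filter P) (t := range (n / s) ×ˢ range (n / s))
        (fun p : Fin n × Fin n => (((p.1 : ℕ) / s, (p.2 : ℕ) / s) : ℕ × ℕ)) ?mem ?inj
      · rw [Finset.card_product, Finset.card_range] at this
        exact this
      case mem =>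
        intro p hp
        rw [Finset.mem_coe, Finset.mem_filter] at hp
        obtain ⟨-, hd1, hd2, hb1, hb2⟩ := hp
        simp only [Finset.mem_coe, mem_product, mem_range]
        constructor
        · have h1 : ((p.1 : ℕ) / s + 1) * s ≤ n := by
            rw [add_mul, one_mul, Nat.div_mul_cancel hd1]; omega
          have := (Nat.le_div_iff_mul_le (by omega : 0 < s)).mpr h1
          omega
        · have h1 : ((p.2 : ℕ) / s + 1) * s ≤ n := by
            rw [add_mul, one_mul, Nat.div_mul_cancel hd2]; omega
          have := (Nat.le_div_iff_mul_le (by omega : 0 < s)).mpr h1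
          omega
      case inj =>
        intro p hp p' hp' he
        simp only [Finset.coe_filter, Set.mem_setOf_eq] at hp hp'
        obtain ⟨-, hd1, hd2, -, -⟩ := hp
        obtain ⟨-, hd1', hd2', -, -⟩ := hp'
        simp only [Prod.mk.injEq] at he
        obtain ⟨e1, e2⟩ := he
        have f1 : (p.1 : ℕ) = (p'.1 : ℕ) := by
          rw [← Nat.div_mul_cancel hd1, ← Nat.div_mul_cancel hd1', e1]
        have f2 : (p.2 : ℕ) = (p'.2 : ℕ) := by
          rw [← Nat.div_mul_cancel hd2, ← Nat.div_mul_cancel hd2', e2]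
        exact Prod.ext (Fin.ext f1) (Fin.ext f2)
    have hFc : F.card = n * n - (Finset.univ.filter P).card := by
      rw [hF, Finset.filter_not, Finset.card_sdiff_of_subset (Finset.filter_subset _ _)]
      congr 1
      simp [Fintype.card_prod]
    omega
  -- Step B : q ^ F.card ≤ blockCount2 (recX q s) n
  have stepB : q ^ F.card ≤ blockCount2 (recX q s) n := by
    set π : (ℤ × ℤ → ZMod q) → (Fin n × Fin n → ZMod q) :=
      (fun x : ℤ × ℤ → ZMod q =>
        fun p : Fin n × Fin n => x (((p.1 : ℕ) : ℤ), ((p.2 : ℕ) : ℤ))) with hπ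
    have hsurj : Function.Surjective
        (fun b : ↥(π '' recX q s) => (fun p : ↥F => b.1 ↑p : ↥F → ZMod q)) := by
      intro h0
      set g : Fin n × Fin n → ZMod q := fun p => if hp : p ∈ F then h0 ⟨p, hp⟩ else 0 with hg
      set hh : ℤ × ℤ → ZMod q := fun v =>
        if hv : 0 ≤ v.1 ∧ v.1 < n ∧ 0 ≤ v.2 ∧ v.2 < n then
          g (⟨v.1.toNat, by omega⟩, ⟨v.2.toNat, by omega⟩) else 0 with hhh
      set x : ℤ × ℤ → ZMod q := xConf r q n hh with hx
      have hxmem : x ∈ recX q s := by rw [hs, hx]; exact xConf_mem r q n hh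
      have heval : ∀ p : Fin n × Fin n, ∀ hp : p ∈ F, π x p = h0 ⟨p, hp⟩ := by
        intro p hp
        set v : ℤ × ℤ := (((p.1 : ℕ) : ℤ), ((p.2 : ℕ) : ℤ)) with hv
        have e1 : v.1 = ((p.1 : ℕ) : ℤ) := rfl
        have e2 : v.2 = ((p.2 : ℕ) : ℤ) := rfl
        have hv1 : 0 ≤ v.1 := by rw [e1]; positivity
        have hv2 : v.1 < n := by rw [e1]; exact_mod_cast p.1.isLt
        have hv3 : 0 ≤ v.2 := by rw [e2]; positivity
        have hv4 : v.2 < n := by rw [e2]; exact_mod_cast p.2.isLt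
        have hne : v ≠ absb r n (SS r * (v.1 / SS r)) (SS r * (v.2 / SS r)) := by
          intro hcon
          obtain ⟨heq, c1, c2, c3, c4⟩ :=
            absb_in_box r n (SS r * (v.1 / SS r)) (SS r * (v.2 / SS r))
              (by rw [← hcon]; exact hv1) (by rw [← hcon]; exact hv2)
              (by rw [← hcon]; exact hv3) (by rw [← hcon]; exact hv4)
          have hveq : v = (SS r * (v.1 / SS r), SS r * (v.2 / SS r)) := hcon.trans heq
          have hvA : v.1 = SS r * (v.1 / SS r) := (Prod.ext_iff.mp hveq).1
          have hvB : v.2 = SS r * (v.2 / SS r) := (Prod.ext_iff.mp hveq).2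
          have hd1 : s ∣ (p.1 : ℕ) := by
            rw [← Int.natCast_dvd_natCast]
            show SS r ∣ ((p.1 : ℕ) : ℤ)
            rw [← e1, hvA]; exact dvd_mul_right _ _
          have hd2 : s ∣ (p.2 : ℕ) := by
            rw [← Int.natCast_dvd_natCast]
            show SS r ∣ ((p.2 : ℕ) : ℤ)
            rw [← e2, hvB]; exact dvd_mul_right _ _
          have hb1 : (p.1 : ℕ) + r < n := by
            have h' : v.1 + r < n := by rw [hvA]; exact c2
            rw [e1] at h'
            exact_mod_cast h'
          have hb2 : (p.2 : ℕ) + r < n := by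
            have h' : v.2 + r < n := by rw [hvB]; exact c4
            rw [e2] at h'
            exact_mod_cast h'
          rw [hF, Finset.mem_filter] at hp
          exact hp.2 ⟨hd1, hd2, hb1, hb2⟩
        have hx1 : π x p = hh v := by
          show x v = hh v
          rw [hx, xConf, if_neg hne]
        rw [hx1]
        simp only [hhh]
        rw [dif_pos ⟨hv1, hv2, hv3, hv4⟩]
        have ht1 : v.1.toNat = (p.1 : ℕ) := by rw [e1]; exact Int.toNat_natCast _
        have ht2 : v.2.toNat = (p.2 : ℕ) := by rw [e2]; exact Int.toNat_natCast _
        have hgp : g p = h0 ⟨p, hp⟩ := by rw [hg]; exact dif_pos hp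
        rw [← hgp]
        congr 1
      refine ⟨⟨π x, ⟨x, hxmem, rfl⟩⟩, ?_⟩
      funext p
      exact heval ↑p p.2
    have hle : Nat.card (↥F → ZMod q) ≤ Nat.card ↥(π '' recX q s) :=
      Nat.card_le_card_of_surjective _ hsurj
    have hcard2 : Nat.card (↥F → ZMod q) = q ^ F.card := by
      rw [Nat.card_eq_fintype_card, Fintype.card_fun, ZMod.card, Fintype.card_coe]
    rw [← hcard2]
    exact le_trans (le_of_eq rfl) (by rw [blockCount2]; exact hle)
  exact le_trans (Nat.pow_le_pow_right (by omega) stepA) stepB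

open Filter Real in
lemma f_nonneg (q : ℕ) (hq : 2 ≤ q) {Q : Type} (X : Set (ℤ × ℤ → Q)) (n : ℕ) :
    0 ≤ Real.logb q (blockCount2 X n) / ((n : ℝ) ^ 2) := by
  have hb : (1 : ℝ) < q := by exact_mod_cast hq
  apply div_nonneg _ (by positivity)
  rcases Nat.eq_zero_or_pos (blockCount2 X n) with h | h
  · rw [h]; simp
  · exact Real.logb_nonneg hb (by exact_mod_cast h)

lemma logb_nat_le (q m e : ℕ) (hq : 2 ≤ q) (h : m ≤ q ^ e) :
    Real.logb q m ≤ (e : ℝ) := by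
  have hb : (1 : ℝ) < q := by exact_mod_cast hq
  rcases Nat.eq_zero_or_pos m with h0 | h0
  · rw [h0]; simp
  · have h1 : Real.logb q m ≤ Real.logb q ((q : ℝ) ^ e) := by
      apply Real.logb_le_logb_of_le hb (by exact_mod_cast h0)
      exact_mod_cast h
    rwa [Real.logb_pow, Real.logb_self_eq_one hb, mul_one] at h1

lemma logb_nat_ge (q m e : ℕ) (hq : 2 ≤ q) (h : q ^ e ≤ m) :
    (e : ℝ) ≤ Real.logb q m := by
  have hb : (1 : ℝ) < q := by exact_mod_cast hq
  have h1 : Real.logb q ((q : ℝ) ^ e) ≤ Real.logb q m := by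
    apply Real.logb_le_logb_of_le hb (by positivity)
    exact_mod_cast h
  rwa [Real.logb_pow, Real.logb_self_eq_one hb, mul_one] at h1

open Filter in
lemma hbound_tendsto (r : ℕ) :
    Tendsto (fun n : ℕ => 1 - (1 / ((r : ℝ) + 1) - 2 / n) ^ 2) atTop
      (nhds (1 - 1 / ((r : ℝ) + 1) ^ 2)) := by
  have h1 : Tendsto (fun n : ℕ => (2 : ℝ) / n) atTop (nhds 0) :=
    tendsto_const_div_atTop_nhds_zero_nat 2
  have h2 : Tendsto (fun n : ℕ => (1 / ((r : ℝ) + 1) - 2 / n) ^ 2) atTop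
      (nhds ((1 / ((r : ℝ) + 1) - 0) ^ 2)) :=
    (tendsto_const_nhds.sub h1).pow 2
  have h3 := tendsto_const_nhds (x := (1 : ℝ)) (f := atTop (α := ℕ)) |>.sub h2
  convert h3 using 2
  rw [sub_zero, one_div, one_div, ← inv_pow]

lemma f_upper {Q : Type} [Fintype Q] (r q : ℕ) (hr : 1 ≤ r) (hq : 2 ≤ q)
    (hcard : Fintype.card Q = q) (X : Set (ℤ × ℤ → Q))
    (hX : IsRecoverable2 {v : ℤ × ℤ | v ≠ 0 ∧ max |v.1| |v.2| ≤ (r : ℤ)} X)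
    (n : ℕ) (hn : 2 * (r + 1) ≤ n) :
    Real.logb q (blockCount2 X n) / ((n : ℝ) ^ 2) ≤
      1 - (1 / ((r : ℝ) + 1) - 2 / n) ^ 2 := by
  set s : ℕ := r + 1 with hs
  set M : ℕ := n / s - 1 with hM
  have hs0 : 0 < s := by omega
  have hn0 : 0 < n := by omega
  have hMn : M ≤ n := by
    have := Nat.div_le_self n s; omega
  have c1 : blockCount2 X n ≤ q ^ (n * n - M * M) :=
    upper_blockCount r q n hr (by omega) hcard X hX
  have c2 : Real.logb q (blockCount2 X n) ≤ ((n * n - M * M : ℕ) : ℝ) :=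
    logb_nat_le q _ _ hq c1
  -- real lower bound on M
  have hdiv2 : 2 ≤ n / s := (Nat.le_div_iff_mul_le hs0).mpr (by omega)
  have hsR : (0 : ℝ) < s := by exact_mod_cast hs0
  have hnR : (0 : ℝ) < n := by exact_mod_cast hn0
  have hMr : (n : ℝ) / s - 2 ≤ (M : ℝ) := by
    have hlt : n < (n / s + 1) * s := (Nat.div_lt_iff_lt_mul hs0).mp (Nat.lt_succ_self _)
    have h1 : M + 1 = n / s := by omega
    have hlt2 : (n : ℝ) < ((M : ℝ) + 2) * s := by
      have : n < ((M + 1) + 1) * s := by rw [h1]; exact hlt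
      exact_mod_cast this
    have := (div_lt_iff₀ hsR).mpr hlt2
    linarith
  have hns2 : (2 : ℝ) ≤ (n : ℝ) / s := by
    rw [le_div_iff₀ hsR]
    exact_mod_cast hn
  have hMsq : ((n : ℝ) / s - 2) ^ 2 ≤ (M : ℝ) ^ 2 := by
    apply pow_le_pow_left₀ (by linarith) hMr
  have hcastsub : ((n * n - M * M : ℕ) : ℝ) = (n : ℝ) ^ 2 - (M : ℝ) ^ 2 := by
    have hle : M * M ≤ n * n := Nat.mul_le_mul hMn hMn
    rw [Nat.cast_sub hle]
    push_cast
    ring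
  have key : Real.logb q (blockCount2 X n) ≤ (n : ℝ) ^ 2 - ((n : ℝ) / s - 2) ^ 2 := by
    rw [hcastsub] at c2
    linarith
  have hid : ((n : ℝ) ^ 2 - ((n : ℝ) / s - 2) ^ 2) / (n : ℝ) ^ 2 =
      1 - (1 / ((r : ℝ) + 1) - 2 / n) ^ 2 := by
    have hsr : (s : ℝ) = (r : ℝ) + 1 := by rw [hs]; push_cast; ring
    rw [← hsr]
    field_simp
  calc Real.logb q (blockCount2 X n) / ((n : ℝ) ^ 2)
      ≤ ((n : ℝ) ^ 2 - ((n : ℝ) / s - 2) ^ 2) / (n : ℝ) ^ 2 := by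
        apply div_le_div_of_nonneg_right key (by positivity) |>.trans_eq rfl
    _ = 1 - (1 / ((r : ℝ) + 1) - 2 / n) ^ 2 := hid

open Filter in
lemma rate_le {Q : Type} [Fintype Q] (r q : ℕ) (hr : 1 ≤ r) (hq : 2 ≤ q)
    (hcard : Fintype.card Q = q) (X : Set (ℤ × ℤ → Q))
    (hX : IsRecoverable2 {v : ℤ × ℤ | v ≠ 0 ∧ max |v.1| |v.2| ≤ (r : ℤ)} X) :
    rate2 q X ≤ 1 - 1 / ((r : ℝ) + 1) ^ 2 := by
  rw [rate2]
  have hub : ∀ᶠ n in atTop, Real.logb q (blockCount2 X n) / ((n : ℝ) ^ 2) ≤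
      1 - (1 / ((r : ℝ) + 1) - 2 / (n : ℝ)) ^ 2 := by
    filter_upwards [eventually_ge_atTop (2 * (r + 1))] with n hn
    exact f_upper r q hr hq hcard X hX n hn
  have h1 : Filter.limsup (fun n : ℕ => Real.logb q (blockCount2 X n) / ((n : ℝ) ^ 2)) atTop ≤
      Filter.limsup (fun n : ℕ => 1 - (1 / ((r : ℝ) + 1) - 2 / (n : ℝ)) ^ 2) atTop := by
    exact Filter.limsup_le_limsup hub
      (Filter.isCoboundedUnder_le_of_le atTop (fun n => f_nonneg q hq X n))
      ((hbound_tendsto r).isBoundedUnder_le)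
  exact h1.trans (le_of_eq (hbound_tendsto r).limsup_eq)

open Filter in
lemma rate_recX (r q : ℕ) (hr : 1 ≤ r) (hq : 2 ≤ q) :
    rate2 q (recX q (r + 1)) = 1 - 1 / ((r : ℝ) + 1) ^ 2 := by
  haveI : NeZero q := ⟨by omega⟩
  have hcard : Fintype.card (ZMod q) = q := ZMod.card q
  have hlow : ∀ n : ℕ, 1 ≤ n → 1 - 1 / ((r : ℝ) + 1) ^ 2 ≤
      Real.logb q (blockCount2 (recX q (r + 1)) n) / ((n : ℝ) ^ 2) := by
    intro n hn
    set s : ℕ := r + 1 with hs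
    have hs0 : 0 < s := by omega
    have hsR : (0 : ℝ) < s := by exact_mod_cast hs0
    have hnR : (0 : ℝ) < n := by exact_mod_cast hn
    set K : ℕ := n / s with hK
    have c1 : q ^ (n * n - K * K) ≤ blockCount2 (recX q (r + 1)) n :=
      lower_blockCount r q n hr hq
    have c2 : ((n * n - K * K : ℕ) : ℝ) ≤ Real.logb q (blockCount2 (recX q (r + 1)) n) :=
      logb_nat_ge q _ _ hq c1
    have hKn : K ≤ n := Nat.div_le_self n s
    have hcastsub : ((n * n - K * K : ℕ) : ℝ) = (n : ℝ) ^ 2 - (K : ℝ) ^ 2 := by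
      rw [Nat.cast_sub (Nat.mul_le_mul hKn hKn)]
      push_cast
      ring
    have hKr : (K : ℝ) ≤ (n : ℝ) / s := Nat.cast_div_le
    have hKsq : (K : ℝ) ^ 2 ≤ ((n : ℝ) / s) ^ 2 :=
      pow_le_pow_left₀ (by positivity) hKr 2
    have hsr : (s : ℝ) = (r : ℝ) + 1 := by rw [hs]; push_cast; ring
    have key : (n : ℝ) ^ 2 - ((n : ℝ) / s) ^ 2 ≤
        Real.logb q (blockCount2 (recX q (r + 1)) n) := by
      rw [hcastsub] at c2
      linarith
    have hid : 1 - 1 / ((r : ℝ) + 1) ^ 2 = ((n : ℝ) ^ 2 - ((n : ℝ) / s) ^ 2) / (n : ℝ) ^ 2 := by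
      rw [← hsr]
      field_simp
    rw [hid]
    exact div_le_div_of_nonneg_right key (by positivity) |>.trans_eq rfl
  have hup : ∀ᶠ n in atTop,
      Real.logb q (blockCount2 (recX q (r + 1)) n) / ((n : ℝ) ^ 2) ≤
        1 - (1 / ((r : ℝ) + 1) - 2 / (n : ℝ)) ^ 2 := by
    filter_upwards [eventually_ge_atTop (2 * (r + 1))] with n hn
    exact f_upper r q hr hq hcard (recX q (r + 1)) (recX_recoverable r q hr) n hn
  have htd : Tendsto (fun n : ℕ =>
      Real.logb q (blockCount2 (recX q (r + 1)) n) / ((n : ℝ) ^ 2)) atTop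
      (nhds (1 - 1 / ((r : ℝ) + 1) ^ 2)) := by
    apply tendsto_of_tendsto_of_tendsto_of_le_of_le' tendsto_const_nhds (hbound_tendsto r)
    · filter_upwards [eventually_ge_atTop 1] with n hn
      exact hlow n hn
    · exact hup
  rw [rate2]
  exact htd.limsup_eq

/-- For the `l∞`-ball recovery set of radius `r`, the supremum of rates of
recoverable systems on `ℤ²` over alphabets of size `q` is `1 − 1/(r+1)²`. -/
theorem stmt13 (r : ℕ) (hr : 1 ≤ r) (q : ℕ) (hq : 2 ≤ q) :
    sSup {x : ℝ | ∃ (Q : Type) (_ : Fintype Q), Fintype.card Q = q ∧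
        ∃ X : Set (ℤ × ℤ → Q),
          IsRecoverable2 {v : ℤ × ℤ | v ≠ 0 ∧ max |v.1| |v.2| ≤ (r : ℤ)} X ∧
          rate2 q X = x} =
      1 - 1 / ((r : ℝ) + 1) ^ 2 := by
  haveI : NeZero q := ⟨by omega⟩
  set L : ℝ := 1 - 1 / ((r : ℝ) + 1) ^ 2 with hL
  set A : Set ℝ := {x : ℝ | ∃ (Q : Type) (_ : Fintype Q), Fintype.card Q = q ∧
      ∃ X : Set (ℤ × ℤ → Q),
        IsRecoverable2 {v : ℤ × ℤ | v ≠ 0 ∧ max |v.1| |v.2| ≤ (r : ℤ)} X ∧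
        rate2 q X = x} with hA
  have hmem : L ∈ A := by
    refine ⟨ZMod q, inferInstance, ZMod.card q, recX q (r + 1),
      recX_recoverable r q hr, rate_recX r q hr hq⟩
  have hub : ∀ x ∈ A, x ≤ L := by
    rintro x ⟨Q, inst, hcard, X, hrec, rfl⟩
    exact rate_le r q hr hq hcard X hrec
  exact le_antisymm (csSup_le ⟨L, hmem⟩ hub) (le_csSup ⟨L, hub⟩ hmem)
end

section
/- Let l, r, b, a be nonnegative integers with 0 ≤ r < l and 0 ≤ b < a, and let R = ({−l, ..., r} × {−b, ..., a}) \ {(0,0)} ⊆ ℤ². Then for every q ≥ 2, the supremum of R_q(X) over all R-recoverable systems X on ℤ² over alphabets of size q equals 1 − 1/((r+1)(b+1)). -/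
open Finset

def cntP (d A B n : ℕ) (i : Fin n) : Prop :=
  ((d:ℤ) ∣ ((i:ℕ):ℤ)) ∧ (A:ℤ) ≤ ((i:ℕ):ℤ) ∧ ((i:ℕ):ℤ) + (B:ℤ) < (n:ℤ)

instance (d A B n : ℕ) : DecidablePred (cntP d A B n) := fun i => by
  unfold cntP; infer_instance

def cnt (d A B n : ℕ) : ℕ := (univ.filter (cntP d A B n)).card

lemma cnt_mul_upper (d A B n : ℕ) (hd : 0 < d) : d * cnt d A B n ≤ n + d := by
  have hcard : cnt d A B n ≤ n / d + 1 := by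
    have h := Finset.card_le_card_of_injOn (fun i : Fin n => (i : ℕ) / d)
      (s := univ.filter (cntP d A B n)) (t := Finset.range (n/d + 1)) ?_ ?_
    · unfold cnt; simpa using h
    · intro i _
      simp only [mem_coe, mem_range]
      have : (i:ℕ) / d ≤ n / d := Nat.div_le_div_right (le_of_lt i.isLt)
      omega
    · intro i hi j hj hij
      simp only [coe_filter, Set.mem_setOf_eq, mem_univ, true_and] at hi hj
      have hdi : d ∣ (i:ℕ) := Int.natCast_dvd_natCast.mp hi.1
      have hdj : d ∣ (j:ℕ) := Int.natCast_dvd_natCast.mp hj.1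
      have : (i:ℕ) = (j:ℕ) := by
        rcases hdi with ⟨ki, hki⟩; rcases hdj with ⟨kj, hkj⟩
        simp only [hki, hkj] at hij ⊢
        rw [Nat.mul_div_cancel_left _ hd, Nat.mul_div_cancel_left _ hd] at hij
        rw [hij]
      exact Fin.ext this
  have h2 : d * (n / d) ≤ n := Nat.mul_div_le n d
  calc d * cnt d A B n ≤ d * (n/d + 1) := Nat.mul_le_mul_left d hcard
    _ ≤ n + d := by rw [Nat.mul_add, Nat.mul_one]; omega

lemma cnt_mul_lower (d A B n : ℕ) (hd : 0 < d) :
    n ≤ d * cnt d A B n + (A + B + 2 * d) := by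
  rcases Nat.eq_zero_or_pos n with rfl | hn
  · omega
  obtain ⟨q0, m0, hm0, hq0⟩ : ∃ qq mm, mm < d ∧ d * qq + mm = A + d - 1 :=
    ⟨(A+d-1)/d, (A+d-1)%d, Nat.mod_lt _ hd, Nat.div_add_mod _ _⟩
  obtain ⟨K, m1, hm1, hK⟩ : ∃ qq mm, mm < d ∧ d * qq + mm = n - B - d * q0 :=
    ⟨(n - B - d*q0)/d, (n - B - d*q0)%d, Nat.mod_lt _ hd, Nat.div_add_mod _ _⟩
  have hrange : ∀ k ∈ Finset.range K, d * q0 + d * k < n := by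
    intro k hk
    simp only [mem_range] at hk
    have : d * (k+1) ≤ d * K := Nat.mul_le_mul_left d hk
    rw [Nat.mul_add, Nat.mul_one] at this
    omega
  have hcard : K ≤ cnt d A B n := by
    have h := Finset.card_le_card_of_injOn
      (fun k : ℕ => if h : d * q0 + d * k < n then (⟨d * q0 + d * k, h⟩ : Fin n)
        else ⟨0, hn⟩)
      (s := Finset.range K) (t := univ.filter (cntP d A B n)) ?_ ?_
    · simpa [cnt] using h
    · intro k hk
      have hlt := hrange k hk
      simp only [dif_pos hlt, mem_coe, mem_filter, mem_univ, true_and]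
      refine ⟨⟨q0 + k, by push_cast; ring⟩, ?_, ?_⟩
      · push_cast; omega
      · push_cast
        simp only [mem_coe, mem_range] at hk
        have : d * (k+1) ≤ d * K := Nat.mul_le_mul_left d hk
        rw [Nat.mul_add, Nat.mul_one] at this
        omega
    · intro k hk k' hk' hkk
      simp only [mem_coe, mem_range] at hk hk'
      have h1 := hrange k (by simpa using hk)
      have h2 := hrange k' (by simpa using hk')
      simp only [dif_pos h1, dif_pos h2, Fin.mk.injEq] at hkk
      have : d * k = d * k' := by omega
      exact Nat.eq_of_mul_eq_mul_left hd this
  have : d * K ≤ d * cnt d A B n := Nat.mul_le_mul_left d hcard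
  omega

open Filter in
lemma lim_main (P C : ℕ) (hP : 0 < P) (cf : ℕ → ℕ)
    (hlo : ∀ᶠ n in atTop, n*n ≤ P * cf n + C*n)
    (hhi : ∀ᶠ n in atTop, P * cf n ≤ n*n + C*n) :
    Tendsto (fun n : ℕ => (((n:ℝ)^2 - (cf n : ℝ)) / (n:ℝ)^2)) atTop
      (nhds (1 - 1/(P:ℝ))) := by
  have hPR : (0:ℝ) < P := by exact_mod_cast hP
  have hCdiv : Tendsto (fun n : ℕ => (C:ℝ)/(n:ℝ)) atTop (nhds 0) :=
    tendsto_const_div_atTop_nhds_zero_nat (C:ℝ)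
  have hu : Tendsto (fun n : ℕ => ((P:ℝ) * (cf n : ℝ)) / (n:ℝ)^2) atTop (nhds 1) := by
    apply tendsto_of_tendsto_of_tendsto_of_le_of_le'
      (g := fun n : ℕ => 1 - (C:ℝ)/(n:ℝ)) (h := fun n : ℕ => 1 + (C:ℝ)/(n:ℝ))
    · simpa using tendsto_const_nhds.sub hCdiv
    · simpa using tendsto_const_nhds.add hCdiv
    · filter_upwards [hlo, eventually_ge_atTop 1] with n hn h1
      have hnR : (0:ℝ) < (n:ℝ) := by exact_mod_cast h1
      have hcast : ((n:ℝ)*(n:ℝ)) ≤ (P:ℝ) * (cf n:ℝ) + (C:ℝ)*(n:ℝ) := by exact_mod_cast hn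
      have e1 : 1 - (C:ℝ)/(n:ℝ) = ((n:ℝ)*(n:ℝ) - (C:ℝ)*(n:ℝ))/(n:ℝ)^2 := by
        field_simp
      rw [e1]
      gcongr
      linarith
    · filter_upwards [hhi, eventually_ge_atTop 1] with n hn h1
      have hnR : (0:ℝ) < (n:ℝ) := by exact_mod_cast h1
      have hcast : (P:ℝ) * (cf n:ℝ) ≤ ((n:ℝ)*(n:ℝ)) + (C:ℝ)*(n:ℝ) := by exact_mod_cast hn
      have e2 : 1 + (C:ℝ)/(n:ℝ) = ((n:ℝ)*(n:ℝ) + (C:ℝ)*(n:ℝ))/(n:ℝ)^2 := by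
        field_simp
      rw [e2]
      gcongr
  have : Tendsto (fun n : ℕ => 1 - (1/(P:ℝ)) * (((P:ℝ) * (cf n : ℝ)) / (n:ℝ)^2)) atTop
      (nhds (1 - 1/(P:ℝ))) := by
    have h2 := (tendsto_const_nhds (x := (1:ℝ)) (f := atTop (α := ℕ))).sub
      ((tendsto_const_nhds (x := 1/(P:ℝ)) (f := atTop (α := ℕ))).mul hu)
    simpa using h2
  apply this.congr'
  filter_upwards [eventually_ge_atTop 1] with n h1
  have hnR : (0:ℝ) < (n:ℝ) := by exact_mod_cast h1
  field_simp

def Rset (l r b a : ℕ) : Set (ℤ × ℤ) :=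
  {v : ℤ × ℤ | v ≠ 0 ∧ -(l : ℤ) ≤ v.1 ∧ v.1 ≤ (r : ℤ) ∧ -(b : ℤ) ≤ v.2 ∧ v.2 ≤ (a : ℤ)}

def inBlk (n : ℕ) (v : ℤ × ℤ) : Prop := 0 ≤ v.1 ∧ v.1 < (n:ℤ) ∧ 0 ≤ v.2 ∧ v.2 < (n:ℤ)

def inD (l r b a n : ℕ) (v : ℤ × ℤ) : Prop :=
  (((r:ℤ)+1 ∣ v.1) ∧ (l:ℤ) ≤ v.1 ∧ v.1 + (r:ℤ) < (n:ℤ)) ∧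
  (((b:ℤ)+1 ∣ v.2) ∧ (b:ℤ) ≤ v.2 ∧ v.2 + (a:ℤ) < (n:ℤ))

lemma agree_of_agree_offD {Q : Type*} (l r b a n : ℕ) (hrl : r < l) (hba : b < a)
    {X : Set (ℤ × ℤ → Q)} (hX : IsRecoverable2 (Rset l r b a) X)
    {x y : ℤ × ℤ → Q} (hx : x ∈ X) (hy : y ∈ X)
    (h : ∀ v : ℤ × ℤ, inBlk n v → ¬ inD l r b a n v → x v = y v) :
    ∀ v : ℤ × ℤ, inBlk n v → x v = y v := by
  have key : ∀ k : ℕ, ∀ v : ℤ × ℤ, inBlk n v →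
      ((n:ℤ) - 1 - v.2) * n + v.1 < (k:ℤ) → x v = y v := by
    intro k
    induction k with
    | zero =>
      intro v hv hk
      exfalso
      obtain ⟨h1, h2, h3, h4⟩ := hv
      have hnn : 0 ≤ ((n:ℤ) - 1 - v.2) * n := mul_nonneg (by omega) (by omega)
      push_cast at hk
      linarith
    | succ k ih =>
      intro v hv hk
      by_cases hD : inD l r b a n v
      · obtain ⟨f, hf1, hf2⟩ := hX v
        rw [← hf2 x hx, ← hf2 y hy]
        apply hf1
        intro u hu
        obtain ⟨hu0, hu1, hu2, hu3, hu4⟩ := hu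
        obtain ⟨⟨hdx, hlx, hrx⟩, hdy, hly, hry⟩ := hD
        obtain ⟨hb1, hb2, hb3, hb4⟩ := hv
        have hblk : inBlk n (v + u) := by
          refine ⟨?_, ?_, ?_, ?_⟩ <;> simp only [Prod.fst_add, Prod.snd_add] <;> omega
        by_cases hD2 : inD l r b a n (v + u)
        · -- (v+u) is a determined lattice point strictly earlier in the order
          obtain ⟨⟨hdx2, _, _⟩, hdy2, _, _⟩ := hD2
          simp only [Prod.fst_add, Prod.snd_add] at hdx2 hdy2
          have hdu1 : ((r:ℤ)+1) ∣ u.1 := by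
            have := dvd_sub hdx2 hdx; simpa using this
          have hdu2 : ((b:ℤ)+1) ∣ u.2 := by
            have := dvd_sub hdy2 hdy; simpa using this
          have hu1le : u.1 ≤ 0 := by
            by_contra hc
            push_neg at hc
            have := Int.le_of_dvd hc hdu1
            omega
          have hu2ge : 0 ≤ u.2 := by
            by_contra hc
            push_neg at hc
            have hneg : ((b:ℤ)+1) ∣ -u.2 := dvd_neg.mpr hdu2
            have := Int.le_of_dvd (by omega) hneg
            omega
          have hne : u.2 = 0 → u.1 < 0 := by
            intro h2
            rcases lt_or_eq_of_le hu1le with hlt | heq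
            · exact hlt
            · exfalso; exact hu0 (Prod.ext (by simp [← heq]) (by simpa using h2))
          apply ih (v + u) hblk
          simp only [Prod.fst_add, Prod.snd_add]
          push_cast at hk ⊢
          have hdec : ((n:ℤ) - 1 - (v.2 + u.2)) * n + (v.1 + u.1)
              ≤ ((n:ℤ) - 1 - v.2) * n + v.1 - 1 := by
            rcases eq_or_lt_of_le hu2ge with heq | hlt
            · have := hne heq.symm
              have : ((n:ℤ) - 1 - (v.2 + u.2)) * n = ((n:ℤ) - 1 - v.2) * n := by
                rw [← heq]; ring_nf
              linarith [hne heq.symm]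
            · have h1n : (1:ℤ) * n ≤ u.2 * n :=
                mul_le_mul_of_nonneg_right (by omega) (by omega)
              have hexp : ((n:ℤ) - 1 - (v.2 + u.2)) * n
                  = ((n:ℤ) - 1 - v.2) * n - u.2 * n := by ring
              -- u.1 ≤ r < n
              have hrn : (r:ℤ) < n := by omega
              linarith
          linarith
        · exact h (v + u) hblk hD2
      · exact h v hv hD
  intro v hv
  have hle := Int.self_le_toNat (((n:ℤ) - 1 - v.2) * n + v.1)
  apply key ((((n:ℤ) - 1 - v.2) * n + v.1).toNat + 1) v hv
  push_cast
  linarith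

open Finset in
lemma blockCount2_le {Q : Type*} [Fintype Q] (l r b a n : ℕ) (hrl : r < l) (hba : b < a)
    {X : Set (ℤ × ℤ → Q)} (hX : IsRecoverable2 (Rset l r b a) X) :
    blockCount2 X n ≤ Fintype.card Q ^ (n * n - cnt (r+1) l r n * cnt (b+1) b a n) := by
  classical
  set F : (ℤ × ℤ → Q) → (Fin n × Fin n → Q) := fun x =>
    fun p : Fin n × Fin n => x (((p.1 : ℕ) : ℤ), ((p.2 : ℕ) : ℤ)) with hF
  set PD : Fin n × Fin n → Prop := fun p => cntP (r+1) l r n p.1 ∧ cntP (b+1) b a n p.2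
    with hPD
  set S : Finset (Fin n × Fin n) := univ.filter (fun p => ¬ PD p) with hS
  -- the key correspondence between PD and inD
  have hPDiff : ∀ p : Fin n × Fin n,
      PD p ↔ inD l r b a n (((p.1 : ℕ) : ℤ), ((p.2 : ℕ) : ℤ)) := by
    intro p
    simp only [hPD, cntP, inD]
    push_cast
    tauto
  -- injectivity of restriction to S
  have hinj : Function.Injective
      (fun (g : ↥(F '' X)) (s : ↥S) => g.1 s.1) := by
    rintro ⟨g1, x, hxX, hgx⟩ ⟨g2, y, hyX, hgy⟩ hg
    apply Subtype.ext
    show g1 = g2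
    have hagree : ∀ v : ℤ × ℤ, inBlk n v → ¬ inD l r b a n v → x v = y v := by
      intro v hv hnD
      obtain ⟨h1, h2, h3, h4⟩ := hv
      set p : Fin n × Fin n := (⟨v.1.toNat, by omega⟩, ⟨v.2.toNat, by omega⟩) with hp
      have hcast : (((p.1 : ℕ) : ℤ), ((p.2 : ℕ) : ℤ)) = v := by
        simp only [hp]
        exact Prod.ext (by simp [Int.toNat_of_nonneg h1]) (by simp [Int.toNat_of_nonneg h3])
      have hpS : p ∈ S := by
        simp only [hS, mem_filter, mem_univ, true_and]
        rw [hPDiff p, hcast]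
        exact hnD
      have := congrFun hg ⟨p, hpS⟩
      simp only at this
      calc x v = x (((p.1 : ℕ) : ℤ), ((p.2 : ℕ) : ℤ)) := by rw [hcast]
        _ = g1 p := by rw [← hgx]
        _ = g2 p := this
        _ = y (((p.1 : ℕ) : ℤ), ((p.2 : ℕ) : ℤ)) := by rw [← hgy]
        _ = y v := by rw [hcast]
    have hall := agree_of_agree_offD l r b a n hrl hba hX hxX hyX hagree
    rw [← hgx, ← hgy]
    funext p
    refine hall (((p.1 : ℕ) : ℤ), ((p.2 : ℕ) : ℤ)) ⟨?_, ?_, ?_, ?_⟩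
    · positivity
    · show ((p.1 : ℕ) : ℤ) < (n : ℤ); exact_mod_cast p.1.isLt
    · positivity
    · show ((p.2 : ℕ) : ℤ) < (n : ℤ); exact_mod_cast p.2.isLt
  have hcard := Nat.card_le_card_of_injective _ hinj
  have hfun : Nat.card (↥S → Q) = Fintype.card Q ^ S.card := by
    rw [Nat.card_eq_fintype_card, Fintype.card_fun, Fintype.card_coe]
  have hScard : S.card = n * n - cnt (r+1) l r n * cnt (b+1) b a n := by
    have hpart := Finset.card_filter_add_card_filter_not
      (s := (univ : Finset (Fin n × Fin n))) (p := PD)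
    have huniv : (univ : Finset (Fin n × Fin n)).card = n * n := by
      simp [Fintype.card_prod]
    have hDprod : (univ.filter PD).card = cnt (r+1) l r n * cnt (b+1) b a n := by
      have hset : univ.filter PD
          = (univ.filter (cntP (r+1) l r n)) ×ˢ (univ.filter (cntP (b+1) b a n)) := by
        ext p
        simp only [hPD, mem_filter, mem_univ, true_and, Finset.mem_product]
      rw [hset, Finset.card_product]
      rfl
    rw [hS]
    omega
  rw [blockCount2]
  calc Nat.card ↥(F '' X) ≤ Nat.card (↥S → Q) := hcard
    _ = Fintype.card Q ^ S.card := hfun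
    _ = _ := by rw [hScard]

noncomputable def Tset (r b : ℕ) : Finset (ℤ × ℤ) :=
  ((Finset.Icc (0:ℤ) (r:ℤ)) ×ˢ (Finset.Icc (0:ℤ) (b:ℤ))).erase (0,0)

lemma mem_Tset {r b : ℕ} {u : ℤ × ℤ} :
    u ∈ Tset r b ↔ u ≠ (0,0) ∧ (0 ≤ u.1 ∧ u.1 ≤ (r:ℤ)) ∧ (0 ≤ u.2 ∧ u.2 ≤ (b:ℤ)) := by
  simp [Tset, Finset.mem_erase, Finset.mem_product, Finset.mem_Icc, and_assoc]

def Lam (r b : ℕ) (v : ℤ × ℤ) : Prop := ((r:ℤ)+1 ∣ v.1) ∧ ((b:ℤ)+1 ∣ v.2)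

lemma no_lattice {r b : ℕ} {v u : ℤ × ℤ} (hv : Lam r b v) (hu : u ∈ Tset r b) :
    ¬ Lam r b (v + u) := by
  rintro ⟨h1, h2⟩
  rw [mem_Tset] at hu
  obtain ⟨hne, ⟨hu1, hu2⟩, hu3, hu4⟩ := hu
  simp only [Prod.fst_add, Prod.snd_add] at h1 h2
  have hd1 : ((r:ℤ)+1) ∣ u.1 := by have := dvd_sub h1 hv.1; simpa using this
  have hd2 : ((b:ℤ)+1) ∣ u.2 := by have := dvd_sub h2 hv.2; simpa using this
  have hz1 : u.1 = 0 := by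
    rcases lt_or_eq_of_le hu1 with h | h
    · have := Int.le_of_dvd h hd1; omega
    · omega
  have hz2 : u.2 = 0 := by
    rcases lt_or_eq_of_le hu3 with h | h
    · have := Int.le_of_dvd h hd2; omega
    · omega
  exact hne (Prod.ext hz1 hz2)

def Xcon (q r b : ℕ) : Set (ℤ × ℤ → ZMod q) :=
  {x | ∀ v : ℤ × ℤ, Lam r b v → x v = ∑ u ∈ Tset r b, x (v + u)}

lemma Xcon_recoverable (q l r b a : ℕ) (hrl : r < l) (hba : b < a) :
    IsRecoverable2 (Rset l r b a) (Xcon q r b) := by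
  intro v
  by_cases hv : Lam r b v
  · refine ⟨fun x => ∑ u ∈ Tset r b, x (v + u), ?_, ?_⟩
    · intro x y hxy
      apply Finset.sum_congr rfl
      intro u hu
      apply hxy
      rw [mem_Tset] at hu
      obtain ⟨hne, ⟨h1, h2⟩, h3, h4⟩ := hu
      refine ⟨hne, by omega, by omega, by omega, by omega⟩
    · intro x hxX
      exact (hxX v hv).symm
  · set i0 := v.1 % ((r:ℤ)+1) with hi0
    set j0 := v.2 % ((b:ℤ)+1) with hj0
    have hi0r : 0 ≤ i0 ∧ i0 ≤ (r:ℤ) := by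
      constructor
      · exact Int.emod_nonneg _ (by omega)
      · have := Int.emod_lt_of_pos v.1 (show (0:ℤ) < (r:ℤ)+1 by omega); omega
    have hj0r : 0 ≤ j0 ∧ j0 ≤ (b:ℤ) := by
      constructor
      · exact Int.emod_nonneg _ (by omega)
      · have := Int.emod_lt_of_pos v.2 (show (0:ℤ) < (b:ℤ)+1 by omega); omega
    have hne : ¬(i0 = 0 ∧ j0 = 0) := by
      rintro ⟨h1, h2⟩
      exact hv ⟨Int.dvd_of_emod_eq_zero h1, Int.dvd_of_emod_eq_zero h2⟩
    have hd0T : ((i0, j0) : ℤ × ℤ) ∈ Tset r b := by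
      rw [mem_Tset]
      refine ⟨?_, ⟨hi0r.1, hi0r.2⟩, hj0r.1, hj0r.2⟩
      intro hc
      exact hne ⟨congrArg Prod.fst hc, congrArg Prod.snd hc⟩
    have hwL : Lam r b (v - ((i0, j0) : ℤ × ℤ)) := by
      constructor
      · show ((r:ℤ)+1) ∣ (v - ((i0,j0):ℤ×ℤ)).1
        have : (v - ((i0,j0):ℤ×ℤ)).1 = v.1 - v.1 % ((r:ℤ)+1) := by
          simp [hi0]
        rw [this, Int.emod_def]
        exact ⟨v.1 / ((r:ℤ)+1), by ring⟩
      · show ((b:ℤ)+1) ∣ (v - ((i0,j0):ℤ×ℤ)).2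
        have : (v - ((i0,j0):ℤ×ℤ)).2 = v.2 - v.2 % ((b:ℤ)+1) := by
          simp [hj0]
        rw [this, Int.emod_def]
        exact ⟨v.2 / ((b:ℤ)+1), by ring⟩
    refine ⟨fun x => x (v + (-i0, -j0))
      - ∑ u ∈ (Tset r b).erase (i0, j0), x (v + (u - (i0, j0))), ?_, ?_⟩
    · intro x y hxy
      have h1 : x (v + (-i0, -j0)) = y (v + (-i0, -j0)) := by
        apply hxy
        refine ⟨?_, by simp; omega, by simp; omega, by simp; omega, by simp; omega⟩
        intro hc
        apply hne
        constructor
        · have := congrArg Prod.fst hc; simp at this; omega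
        · have := congrArg Prod.snd hc; simp at this; omega
      have h2 : ∀ u ∈ (Tset r b).erase (i0, j0),
          x (v + (u - (i0, j0))) = y (v + (u - (i0, j0))) := by
        intro u hu
        rw [Finset.mem_erase, mem_Tset] at hu
        obtain ⟨hun, hne2, ⟨hu1, hu2⟩, hu3, hu4⟩ := hu
        apply hxy
        refine ⟨?_, by simp; omega, by simp; omega, by simp; omega, by simp; omega⟩
        intro hc
        apply hun
        have e1 := congrArg Prod.fst hc; simp at e1
        have e2 := congrArg Prod.snd hc; simp at e2
        exact Prod.ext (by omega) (by omega)
      beta_reduce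
      rw [h1]
      congr 1
      exact Finset.sum_congr rfl h2
    · intro x hxX
      have hcon := hxX (v - ((i0, j0) : ℤ × ℤ)) hwL
      have hsplit : ∑ u ∈ Tset r b, x ((v - ((i0, j0) : ℤ × ℤ)) + u)
          = x ((v - ((i0, j0) : ℤ × ℤ)) + (i0, j0))
            + ∑ u ∈ (Tset r b).erase (i0, j0), x ((v - ((i0, j0) : ℤ × ℤ)) + u) :=
        (Finset.add_sum_erase _ _ hd0T).symm
      have hwv : (v - ((i0, j0) : ℤ × ℤ)) + ((i0, j0) : ℤ × ℤ) = v := by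
        exact sub_add_cancel v _
      have hvw : v + ((-i0, -j0) : ℤ × ℤ) = v - ((i0, j0) : ℤ × ℤ) := by
        rw [sub_eq_add_neg, Prod.neg_mk]
      have hsum : ∀ u : ℤ × ℤ, v + (u - (i0, j0)) = (v - ((i0, j0) : ℤ × ℤ)) + u := by
        intro u; ring
      beta_reduce
      rw [hvw, hcon, hsplit, hwv]
      have : ∑ u ∈ (Tset r b).erase (i0, j0), x (v + (u - (i0, j0)))
          = ∑ u ∈ (Tset r b).erase (i0, j0), x ((v - ((i0, j0) : ℤ × ℤ)) + u) := by
        apply Finset.sum_congr rfl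
        intro u _
        rw [hsum u]
      rw [this]
      ring

instance LamDec (r b : ℕ) (v : ℤ × ℤ) : Decidable (Lam r b v) :=
  decidable_of_iff ((v.1 % ((r:ℤ)+1) = 0) ∧ (v.2 % ((b:ℤ)+1) = 0)) (by
    rw [Lam, ← Int.dvd_iff_emod_eq_zero, ← Int.dvd_iff_emod_eq_zero])

noncomputable def Psi (q r b : ℕ) (g : ℤ × ℤ → ZMod q) : ℤ × ℤ → ZMod q :=
  fun v => if Lam r b v then ∑ u ∈ Tset r b, g (v + u) else g v

lemma Psi_mem (q r b : ℕ) (g : ℤ × ℤ → ZMod q) : Psi q r b g ∈ Xcon q r b := by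
  intro v hv
  show (if Lam r b v then ∑ u ∈ Tset r b, g (v + u) else g v) = _
  rw [if_pos hv]
  apply Finset.sum_congr rfl
  intro u hu
  have hnl := no_lattice hv hu
  show g (v + u) = if Lam r b (v + u) then _ else g (v + u)
  rw [if_neg hnl]

lemma Psi_off (q r b : ℕ) (g : ℤ × ℤ → ZMod q) (v : ℤ × ℤ) (hv : ¬ Lam r b v) :
    Psi q r b g v = g v := if_neg hv

open Finset in
lemma blockCount2_ge (q r b n : ℕ) [NeZero q] :
    q ^ (n * n - cnt (r+1) 0 0 n * cnt (b+1) 0 0 n) ≤ blockCount2 (Xcon q r b) n := by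
  classical
  set F : (ℤ × ℤ → ZMod q) → (Fin n × Fin n → ZMod q) := fun x =>
    fun p : Fin n × Fin n => x (((p.1 : ℕ) : ℤ), ((p.2 : ℕ) : ℤ)) with hF
  set PL : Fin n × Fin n → Prop := fun p => cntP (r+1) 0 0 n p.1 ∧ cntP (b+1) 0 0 n p.2
    with hPL
  set S : Finset (Fin n × Fin n) := univ.filter (fun p => ¬ PL p) with hS
  have hPLiff : ∀ p : Fin n × Fin n, PL p ↔ Lam r b (((p.1:ℕ):ℤ), ((p.2:ℕ):ℤ)) := by
    intro p
    have hp1 : (p.1 : ℕ) < n := p.1.isLt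
    have hp2 : (p.2 : ℕ) < n := p.2.isLt
    simp only [hPL, cntP, Lam]
    push_cast
    constructor
    · rintro ⟨⟨h1, _, _⟩, ⟨h2, _, _⟩⟩; exact ⟨h1, h2⟩
    · rintro ⟨h1, h2⟩
      exact ⟨⟨h1, by positivity, by push_cast; omega⟩, ⟨h2, by positivity, by push_cast; omega⟩⟩
  set ext : (↥S → ZMod q) → (ℤ × ℤ → ZMod q) := fun h v =>
    if hv : ∃ p : Fin n × Fin n, p ∈ S ∧ ((((p.1:ℕ):ℤ), ((p.2:ℕ):ℤ)) : ℤ × ℤ) = v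
    then h ⟨hv.choose, hv.choose_spec.1⟩ else 0 with hext
  have hextval : ∀ (h : ↥S → ZMod q) (s : ↥S),
      ext h (((s.1.1 : ℕ) : ℤ), ((s.1.2 : ℕ) : ℤ)) = h s := by
    intro h s
    have hex : ∃ p : Fin n × Fin n, p ∈ S ∧
        ((((p.1:ℕ):ℤ), ((p.2:ℕ):ℤ)) : ℤ × ℤ) = (((s.1.1 : ℕ) : ℤ), ((s.1.2 : ℕ) : ℤ)) :=
      ⟨s.1, s.2, rfl⟩
    simp only [hext]
    rw [dif_pos hex]
    congr 1
    apply Subtype.ext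
    have hspec := hex.choose_spec.2
    have h1 : ((hex.choose.1 : ℕ) : ℤ) = ((s.1.1 : ℕ) : ℤ) := congrArg Prod.fst hspec
    have h2 : ((hex.choose.2 : ℕ) : ℤ) = ((s.1.2 : ℕ) : ℤ) := congrArg Prod.snd hspec
    exact Prod.ext (Fin.ext (by exact_mod_cast h1)) (Fin.ext (by exact_mod_cast h2))
  have hinj : Function.Injective (fun h : ↥S → ZMod q =>
      (⟨F (Psi q r b (ext h)), ⟨Psi q r b (ext h), Psi_mem q r b (ext h), rfl⟩⟩ :
        ↥(F '' (Xcon q r b)))) := by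
    intro h1 h2 heq
    funext s
    have hnl : ¬ Lam r b (((s.1.1 : ℕ) : ℤ), ((s.1.2 : ℕ) : ℤ)) := by
      have hs : s.1 ∈ Finset.filter (fun p => ¬ PL p) univ := by rw [← hS]; exact s.2
      have hs2 := (Finset.mem_filter.mp hs).2
      rw [← hPLiff s.1]
      exact hs2
    have e1 : F (Psi q r b (ext h1)) s.1 = h1 s := by
      show Psi q r b (ext h1) (((s.1.1 : ℕ) : ℤ), ((s.1.2 : ℕ) : ℤ)) = h1 s
      rw [Psi_off _ _ _ _ _ hnl]
      exact hextval h1 s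
    have e2 : F (Psi q r b (ext h2)) s.1 = h2 s := by
      show Psi q r b (ext h2) (((s.1.1 : ℕ) : ℤ), ((s.1.2 : ℕ) : ℤ)) = h2 s
      rw [Psi_off _ _ _ _ _ hnl]
      exact hextval h2 s
    have hval := congrFun (congrArg Subtype.val heq) s.1
    simp only at hval
    rw [← e1, ← e2]
    exact hval
  haveI : Finite ↥(F '' (Xcon q r b)) := by
    have : Finite (Fin n × Fin n → ZMod q) := by infer_instance
    exact Subtype.finite
  have hcard := Nat.card_le_card_of_injective _ hinj
  have hfun : Nat.card (↥S → ZMod q) = q ^ S.card := by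
    rw [Nat.card_eq_fintype_card, Fintype.card_fun, Fintype.card_coe, ZMod.card]
  have hScard : S.card = n * n - cnt (r+1) 0 0 n * cnt (b+1) 0 0 n := by
    have hpart := Finset.card_filter_add_card_filter_not
      (s := (univ : Finset (Fin n × Fin n))) (p := PL)
    have huniv : (univ : Finset (Fin n × Fin n)).card = n * n := by
      simp [Fintype.card_prod]
    have hDprod : (univ.filter PL).card = cnt (r+1) 0 0 n * cnt (b+1) 0 0 n := by
      have hset : univ.filter PL
          = (univ.filter (cntP (r+1) 0 0 n)) ×ˢ (univ.filter (cntP (b+1) 0 0 n)) := by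
        ext p
        simp only [hPL, mem_filter, mem_univ, true_and, Finset.mem_product]
      rw [hset, Finset.card_product]
      rfl
    rw [hS]
    omega
  rw [blockCount2, ← hScard, ← hfun]
  exact hcard

lemma cnt_le_n (d A B n : ℕ) : cnt d A B n ≤ n :=
  (Finset.card_filter_le _ _).trans (by simp)

open Filter in
lemma Dtend_gen (d1 d2 A1 B1 A2 B2 : ℕ) (h1 : 0 < d1) (h2 : 0 < d2) :
    Tendsto (fun n : ℕ =>
        ((n:ℝ)^2 - ((cnt d1 A1 B1 n * cnt d2 A2 B2 n : ℕ):ℝ))/(n:ℝ)^2)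
      atTop (nhds (1 - 1/((d1:ℝ)*(d2:ℝ)))) := by
  set E1 := A1 + B1 + 2*d1 with hE1
  set E2 := A2 + B2 + 2*d2 with hE2
  set C := E1 + E2 + E1*d2 + E2*d1 + E1*E2 + d1 + d2 + d1*d2 with hC
  clear_value E1 E2 C
  have hmain := lim_main (d1*d2) C (by positivity)
    (fun n => cnt d1 A1 B1 n * cnt d2 A2 B2 n) ?_ ?_
  · have hcst : ((d1*d2 : ℕ):ℝ) = (d1:ℝ)*(d2:ℝ) := by push_cast; ring
    rw [hcst] at hmain
    exact hmain
  · filter_upwards [eventually_ge_atTop 1] with n hn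
    have hx1 : n ≤ d1 * cnt d1 A1 B1 n + E1 := hE1 ▸ cnt_mul_lower d1 A1 B1 n h1
    have hx2 : n ≤ d2 * cnt d2 A2 B2 n + E2 := hE2 ▸ cnt_mul_lower d2 A2 B2 n h2
    have hy1 : d1 * cnt d1 A1 B1 n ≤ n + d1 := cnt_mul_upper d1 A1 B1 n h1
    have hy2 : d2 * cnt d2 A2 B2 n ≤ n + d2 := cnt_mul_upper d2 A2 B2 n h2
    have hprod : n * n ≤ (d1 * cnt d1 A1 B1 n + E1) * (d2 * cnt d2 A2 B2 n + E2) :=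
      Nat.mul_le_mul hx1 hx2
    have he1 : E1 * (d2 * cnt d2 A2 B2 n) ≤ E1 * (n + d2) := Nat.mul_le_mul_left E1 hy2
    have he2 : E2 * (d1 * cnt d1 A1 B1 n) ≤ E2 * (n + d1) := Nat.mul_le_mul_left E2 hy1
    have hp1 : E1 * d2 * 1 ≤ E1 * d2 * n := Nat.mul_le_mul_left (E1*d2) hn
    have hp2 : E2 * d1 * 1 ≤ E2 * d1 * n := Nat.mul_le_mul_left (E2*d1) hn
    have hp3 : E1 * E2 * 1 ≤ E1 * E2 * n := Nat.mul_le_mul_left (E1*E2) hn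
    have hCn : C*n = E1*n + E2*n + (E1*d2)*n + (E2*d1)*n + (E1*E2)*n
        + d1*n + d2*n + (d1*d2)*n := by rw [hC]; ring
    ring_nf at hprod he1 he2 hp1 hp2 hp3 hCn ⊢
    linarith [hprod, he1, he2, hp1, hp2, hp3, hCn, Nat.zero_le (n*d1),
      Nat.zero_le (n*d1*d2), Nat.zero_le (n*d2)]
  · filter_upwards [eventually_ge_atTop 1] with n hn
    have hy1 : d1 * cnt d1 A1 B1 n ≤ n + d1 := cnt_mul_upper d1 A1 B1 n h1
    have hy2 : d2 * cnt d2 A2 B2 n ≤ n + d2 := cnt_mul_upper d2 A2 B2 n h2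
    have hprod : (d1 * cnt d1 A1 B1 n) * (d2 * cnt d2 A2 B2 n) ≤ (n + d1) * (n + d2) :=
      Nat.mul_le_mul hy1 hy2
    have hp1 : d1 * d2 * 1 ≤ d1 * d2 * n := Nat.mul_le_mul_left (d1*d2) hn
    have hCn : C*n = E1*n + E2*n + (E1*d2)*n + (E2*d1)*n + (E1*E2)*n
        + d1*n + d2*n + (d1*d2)*n := by rw [hC]; ring
    ring_nf at hprod hp1 hCn ⊢
    linarith [hprod, hp1, hCn, Nat.zero_le (E1*n), Nat.zero_le (E2*n),
      Nat.zero_le (E1*d2*n), Nat.zero_le (E2*d1*n), Nat.zero_le (E1*E2*n)]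

open Filter in
lemma rate_le_of_recoverable {Q : Type*} [Fintype Q] (l r b a q : ℕ)
    (hrl : r < l) (hba : b < a) (hq : 2 ≤ q) (hcard : Fintype.card Q = q)
    {X : Set (ℤ × ℤ → Q)} (hX : IsRecoverable2 (Rset l r b a) X) :
    rate2 q X ≤ 1 - 1/(((r:ℝ)+1)*((b:ℝ)+1)) := by
  have hqR : (1:ℝ) < (q:ℝ) := by exact_mod_cast (by omega : 1 < q)
  set u : ℕ → ℝ := fun n =>
    ((n:ℝ)^2 - ((cnt (r+1) l r n * cnt (b+1) b a n : ℕ):ℝ))/(n:ℝ)^2 with hu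
  have hut : Tendsto u atTop (nhds (1 - 1/(((r:ℝ)+1)*((b:ℝ)+1)))) := by
    have h := Dtend_gen (r+1) (b+1) l r b a (by omega) (by omega)
    have hcast : ((r+1 : ℕ):ℝ) = (r:ℝ)+1 := by push_cast; ring
    have hcast2 : ((b+1 : ℕ):ℝ) = (b:ℝ)+1 := by push_cast; ring
    rw [hcast, hcast2] at h
    exact h
  set av : ℕ → ℝ := fun n => Real.logb q (blockCount2 X n) / ((n : ℝ) ^ 2) with hav
  have hnonneg : ∀ n, 0 ≤ av n := by
    intro n
    apply div_nonneg _ (by positivity)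
    rcases Nat.eq_zero_or_pos (blockCount2 X n) with h | h
    · rw [h]; simp [Real.logb_zero]
    · exact Real.logb_nonneg hqR (by exact_mod_cast h)
  have hle : ∀ᶠ n in atTop, av n ≤ u n := by
    filter_upwards [eventually_ge_atTop 1] with n hn
    have hmn : cnt (r+1) l r n * cnt (b+1) b a n ≤ n * n :=
      Nat.mul_le_mul (cnt_le_n _ _ _ _) (cnt_le_n _ _ _ _)
    set k := n * n - cnt (r+1) l r n * cnt (b+1) b a n with hk
    have hbc : blockCount2 X n ≤ q ^ k := by
      rw [← hcard]
      exact blockCount2_le l r b a n hrl hba hX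
    have hlogb : Real.logb q (blockCount2 X n) ≤ (k : ℝ) := by
      rcases Nat.eq_zero_or_pos (blockCount2 X n) with h | h
      · rw [h]; simp [Real.logb_zero]
      · calc Real.logb q (blockCount2 X n) ≤ Real.logb q ((q:ℝ)^k) := by
              apply Real.logb_le_logb_of_le hqR (by exact_mod_cast h)
              exact_mod_cast hbc
          _ = (k : ℝ) := by
              rw [Real.logb_pow, Real.logb_self_eq_one hqR, mul_one]
    have hkc : (k : ℝ) = (n:ℝ)^2 - ((cnt (r+1) l r n * cnt (b+1) b a n : ℕ):ℝ) := by
      rw [hk, Nat.cast_sub hmn]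
      push_cast
      ring
    show av n ≤ u n
    simp only [hav, hu]
    exact (div_le_div_iff_of_pos_right (by positivity)).mpr (by linarith)
  have hcob : Filter.IsCoboundedUnder (· ≤ ·) atTop av :=
    Filter.isCoboundedUnder_le_of_eventually_le atTop (x := 0)
      (Eventually.of_forall hnonneg)
  have hbdd : Filter.IsBoundedUnder (· ≤ ·) atTop u := hut.isBoundedUnder_le
  have hrate : rate2 q X = Filter.limsup av atTop := rfl
  rw [hrate]
  calc Filter.limsup av atTop ≤ Filter.limsup u atTop :=
        Filter.limsup_le_limsup hle hcob hbdd
    _ = _ := hut.limsup_eq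

open Filter in
lemma rate_con (q l r b a : ℕ) [NeZero q] (hq : 2 ≤ q) (hrl : r < l) (hba : b < a) :
    rate2 q (Xcon q r b) = 1 - 1/(((r:ℝ)+1)*((b:ℝ)+1)) := by
  have hqR : (1:ℝ) < (q:ℝ) := by exact_mod_cast (by omega : 1 < q)
  set av : ℕ → ℝ := fun n =>
    Real.logb q (blockCount2 (Xcon q r b) n) / ((n : ℝ) ^ 2) with hav
  have hlo : Tendsto (fun n : ℕ =>
      ((n:ℝ)^2 - ((cnt (r+1) 0 0 n * cnt (b+1) 0 0 n : ℕ):ℝ))/(n:ℝ)^2) atTop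
      (nhds (1 - 1/(((r:ℝ)+1)*((b:ℝ)+1)))) := by
    have h := Dtend_gen (r+1) (b+1) 0 0 0 0 (by omega) (by omega)
    have hcast : ((r+1 : ℕ):ℝ) = (r:ℝ)+1 := by push_cast; ring
    have hcast2 : ((b+1 : ℕ):ℝ) = (b:ℝ)+1 := by push_cast; ring
    rw [hcast, hcast2] at h
    exact h
  have hhi : Tendsto (fun n : ℕ =>
      ((n:ℝ)^2 - ((cnt (r+1) l r n * cnt (b+1) b a n : ℕ):ℝ))/(n:ℝ)^2) atTop
      (nhds (1 - 1/(((r:ℝ)+1)*((b:ℝ)+1)))) := by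
    have h := Dtend_gen (r+1) (b+1) l r b a (by omega) (by omega)
    have hcast : ((r+1 : ℕ):ℝ) = (r:ℝ)+1 := by push_cast; ring
    have hcast2 : ((b+1 : ℕ):ℝ) = (b:ℝ)+1 := by push_cast; ring
    rw [hcast, hcast2] at h
    exact h
  have htend : Tendsto av atTop (nhds (1 - 1/(((r:ℝ)+1)*((b:ℝ)+1)))) := by
    apply tendsto_of_tendsto_of_tendsto_of_le_of_le' hlo hhi
    · -- lower bound
      filter_upwards [eventually_ge_atTop 1] with n hn
      have hmn : cnt (r+1) 0 0 n * cnt (b+1) 0 0 n ≤ n * n :=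
        Nat.mul_le_mul (cnt_le_n _ _ _ _) (cnt_le_n _ _ _ _)
      set k := n * n - cnt (r+1) 0 0 n * cnt (b+1) 0 0 n with hk
      have hbc : q ^ k ≤ blockCount2 (Xcon q r b) n := blockCount2_ge q r b n
      have hqk1 : (1:ℝ) ≤ (q:ℝ)^k := one_le_pow₀ (by linarith)
      have hlogb : (k : ℝ) ≤ Real.logb q (blockCount2 (Xcon q r b) n) := by
        calc (k:ℝ) = Real.logb q ((q:ℝ)^k) := by
              rw [Real.logb_pow, Real.logb_self_eq_one hqR, mul_one]
          _ ≤ _ := by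
              apply Real.logb_le_logb_of_le hqR (by positivity)
              exact_mod_cast hbc
      have hkc : (k : ℝ) = (n:ℝ)^2 - ((cnt (r+1) 0 0 n * cnt (b+1) 0 0 n : ℕ):ℝ) := by
        rw [hk, Nat.cast_sub hmn]
        push_cast
        ring
      show _ ≤ av n
      simp only [hav]
      exact (div_le_div_iff_of_pos_right (by positivity)).mpr (by linarith)
    · -- upper bound
      filter_upwards [eventually_ge_atTop 1] with n hn
      have hmn : cnt (r+1) l r n * cnt (b+1) b a n ≤ n * n :=
        Nat.mul_le_mul (cnt_le_n _ _ _ _) (cnt_le_n _ _ _ _)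
      set k := n * n - cnt (r+1) l r n * cnt (b+1) b a n with hk
      have hbc : blockCount2 (Xcon q r b) n ≤ q ^ k := by
        have := blockCount2_le l r b a n hrl hba
          (Xcon_recoverable q l r b a hrl hba)
        rwa [ZMod.card q] at this
      have hlogb : Real.logb q (blockCount2 (Xcon q r b) n) ≤ (k : ℝ) := by
        rcases Nat.eq_zero_or_pos (blockCount2 (Xcon q r b) n) with h | h
        · rw [h]; simp [Real.logb_zero]
        · calc Real.logb q (blockCount2 (Xcon q r b) n) ≤ Real.logb q ((q:ℝ)^k) := by
                apply Real.logb_le_logb_of_le hqR (by exact_mod_cast h)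
                exact_mod_cast hbc
            _ = (k : ℝ) := by
                rw [Real.logb_pow, Real.logb_self_eq_one hqR]
                ring
      have hkc : (k : ℝ) = (n:ℝ)^2 - ((cnt (r+1) l r n * cnt (b+1) b a n : ℕ):ℝ) := by
        rw [hk, Nat.cast_sub hmn]
        push_cast
        ring
      show av n ≤ _
      simp only [hav]
      exact (div_le_div_iff_of_pos_right (by positivity)).mpr (by linarith)
  exact htend.limsup_eq

/-- For the rectangular recovery set `R = ([−l,r] × [−b,a]) \ {0}` with
`0 ≤ r < l` and `0 ≤ b < a`, the supremum of rates of recoverable systems on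
`ℤ²` over alphabets of size `q` is `1 − 1/((r+1)(b+1))`. -/
theorem stmt15 (l r b a : ℕ) (hrl : r < l) (hba : b < a) (q : ℕ) (hq : 2 ≤ q) :
    sSup {x : ℝ | ∃ (Q : Type) (_ : Fintype Q), Fintype.card Q = q ∧
        ∃ X : Set (ℤ × ℤ → Q),
          IsRecoverable2 {v : ℤ × ℤ | v ≠ 0 ∧
            -(l : ℤ) ≤ v.1 ∧ v.1 ≤ (r : ℤ) ∧ -(b : ℤ) ≤ v.2 ∧ v.2 ≤ (a : ℤ)} X ∧
          rate2 q X = x} =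
      1 - 1 / (((r : ℝ) + 1) * ((b : ℝ) + 1)) := by
  haveI : NeZero q := ⟨by omega⟩
  set L : ℝ := 1 - 1 / (((r : ℝ) + 1) * ((b : ℝ) + 1)) with hL
  set S : Set ℝ := {x : ℝ | ∃ (Q : Type) (_ : Fintype Q), Fintype.card Q = q ∧
      ∃ X : Set (ℤ × ℤ → Q),
        IsRecoverable2 {v : ℤ × ℤ | v ≠ 0 ∧
          -(l : ℤ) ≤ v.1 ∧ v.1 ≤ (r : ℤ) ∧ -(b : ℤ) ≤ v.2 ∧ v.2 ≤ (a : ℤ)} X ∧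
        rate2 q X = x} with hS
  have hub : ∀ x ∈ S, x ≤ L := by
    rintro x ⟨Q, hQf, hQcard, X, hXrec, rfl⟩
    exact @rate_le_of_recoverable Q hQf l r b a q hrl hba hq hQcard X hXrec
  have hmem : L ∈ S := by
    refine ⟨ZMod q, inferInstance, ZMod.card q, Xcon q r b,
      Xcon_recoverable q l r b a hrl hba, ?_⟩
    exact rate_con q l r b a hq hrl hba
  exact le_antisymm (csSup_le ⟨L, hmem⟩ hub) (le_csSup ⟨L, fun x hx => hub x hx⟩ hmem)
end

section
/- Let l, r ≥ 1 be integers, let R = {1, ..., r} ∪ {−1, ..., −l} ⊆ ℤ, let m = min{l, r}, and let n ≥ 1 be divisible by m + 1. Let G be the directed graph on vertex set {0, 1, ..., n−1} with an edge from i to j whenever j − i ∈ R. Then for every q ≥ 2, the maximum cardinality of a storage code on G over an alphabet of size q equals q^{n·m/(m+1)}; equivalently, the maximum rate equals m/(m+1). Moreover, {i(m+1) : 0 ≤ i < n/(m+1)} is a maximum DAG set in G. -/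
def IsStorageCode {V Q : Type*} (E : V → V → Prop) (C : Set (V → Q)) : Prop :=
  ∀ v : V, ∃ f : (V → Q) → Q,
    (∀ x y : V → Q, (∀ u : V, E v u → x u = y u) → f x = f y) ∧
    ∀ x ∈ C, f x = x v

def HasCycleIn {V : Type*} (E : V → V → Prop) (S : Set V) : Prop :=
  ∃ (m : ℕ) (f : Fin (m + 1) → V), 0 < m ∧ (∀ i, f i ∈ S) ∧
    f 0 = f (Fin.last m) ∧ ∀ i : Fin m, E (f i.castSucc) (f i.succ)

def IsDagSet {V : Type*} (E : V → V → Prop) (S : Set V) : Prop := ¬ HasCycleIn E S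

/-- The directed graph on `{0,…,n−1}` with an edge `i → j` iff
`j − i ∈ {1,…,r} ∪ {−1,…,−l}`. -/
def lineRel (l r n : ℕ) : Fin n → Fin n → Prop := fun i j =>
  (1 ≤ ((j : ℕ) : ℤ) - ((i : ℕ) : ℤ) ∧ ((j : ℕ) : ℤ) - ((i : ℕ) : ℤ) ≤ (r : ℤ)) ∨
  (-(l : ℤ) ≤ ((j : ℕ) : ℤ) - ((i : ℕ) : ℤ) ∧ ((j : ℕ) : ℤ) - ((i : ℕ) : ℤ) ≤ -1)

lemma st19_sameBlock {l r n k : ℕ} (hkl : k ≤ l + 1) (hkr : k ≤ r + 1) (hk : 0 < k)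
    {i j : Fin n} (hne : i ≠ j) (hblk : (i : ℕ) / k = (j : ℕ) / k) :
    lineRel l r n i j := by
  have e1 : k * ((i : ℕ) / k) ≤ (i : ℕ) := Nat.mul_div_le _ k
  have e2 : (i : ℕ) < k * ((i : ℕ) / k) + k := by
    have := Nat.lt_mul_div_succ (i : ℕ) hk
    rwa [Nat.mul_succ] at this
  have e3 : k * ((j : ℕ) / k) ≤ (j : ℕ) := Nat.mul_div_le _ k
  have e4 : (j : ℕ) < k * ((j : ℕ) / k) + k := by
    have := Nat.lt_mul_div_succ (j : ℕ) hk
    rwa [Nat.mul_succ] at this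
  rw [hblk] at e1 e2
  generalize k * ((j : ℕ) / k) = T at e1 e2 e3 e4
  have hne' : (i : ℕ) ≠ (j : ℕ) := fun h => hne (Fin.ext h)
  unfold lineRel
  omega

lemma st19_rel_symm {l r n : ℕ} {i j : Fin n} (h : lineRel l r n i j) :
    lineRel r l n j i := by
  unfold lineRel at h ⊢; omega

lemma st19_dirL {l r n : ℕ} (hlr : l ≤ r) {i j : Fin n}
    (hi : (l + 1) ∣ (i : ℕ)) (hj : (l + 1) ∣ (j : ℕ)) (hrel : lineRel l r n i j) :
    (i : ℕ) < (j : ℕ) := by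
  have hd : ((l : ℤ) + 1) ∣ (((i : ℕ) : ℤ) - ((j : ℕ) : ℤ)) := by
    obtain ⟨a, ha⟩ := hi; obtain ⟨b, hb⟩ := hj
    exact ⟨a - b, by push_cast [ha, hb]; ring⟩
  rcases hrel with ⟨h1, h2⟩ | ⟨h1, h2⟩
  · omega
  · exfalso
    have : (l : ℤ) + 1 ≤ ((i : ℕ) : ℤ) - ((j : ℕ) : ℤ) :=
      Int.le_of_dvd (by omega) hd
    omega

lemma st19_chain {α : Type*} [Preorder α] {N : ℕ} (hN : 0 < N) (g : Fin (N + 1) → α)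
    (h : ∀ i : Fin N, g i.castSucc < g i.succ) : g 0 < g (Fin.last N) :=
  (Fin.strictMono_iff_lt_succ.2 h) (by rw [Fin.lt_def]; simp [hN])

lemma st19_count {n k c : ℕ} (hk : 0 < k) (hn : n = k * c) :
    (Finset.univ.filter fun i : Fin n => k ∣ (i : ℕ)).card = c := by
  rw [← Finset.card_range c]
  refine Finset.card_bij' (fun (i : Fin n) _ => (i : ℕ) / k)
    (fun j hj => (⟨j * k, ?_⟩ : Fin n)) ?_ ?_ ?_ ?_
  · have hj' := Finset.mem_range.mp hj
    calc j * k < c * k := Nat.mul_lt_mul_of_pos_right hj' hk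
    _ = n := by rw [hn, mul_comm]
  · intro a ha
    rw [Finset.mem_range]
    have h1 : (a : ℕ) < n := a.2
    have h2 := Nat.div_lt_div_of_lt_of_dvd (a := (a : ℕ)) (b := n) (d := k) ⟨c, hn⟩ h1
    exact lt_of_lt_of_eq h2 (by rw [hn, Nat.mul_div_cancel_left _ hk])
  · intro b _
    simp only [Finset.mem_filter, Finset.mem_univ, true_and]
    exact Dvd.intro_left _ rfl
  · intro a ha
    have hdvd : k ∣ (a : ℕ) := (Finset.mem_filter.mp ha).2
    exact Fin.ext (Nat.div_mul_cancel hdvd)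
  · intro b _
    exact Nat.mul_div_cancel _ hk

lemma st19_unique {l r n k : ℕ} {Q : Type*} (C : Set (Fin n → Q))
    (hC : IsStorageCode (lineRel l r n) C) (μ : Fin n → ℕ)
    (hdir : ∀ v u : Fin n, k ∣ (v : ℕ) → k ∣ (u : ℕ) → lineRel l r n v u → μ u < μ v)
    {x y : Fin n → Q} (hx : x ∈ C) (hy : y ∈ C)
    (hagree : ∀ v : Fin n, ¬ k ∣ (v : ℕ) → x v = y v) : x = y := by
  have key : ∀ N (v : Fin n), μ v < N → x v = y v := by
    intro N
    induction N with
    | zero => intro v hv; omega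
    | succ N ih =>
      intro v hv
      by_cases hld : k ∣ (v : ℕ)
      · obtain ⟨f, hf1, hf2⟩ := hC v
        rw [← hf2 x hx, ← hf2 y hy]
        apply hf1
        intro u hu
        by_cases hu' : k ∣ (u : ℕ)
        · exact ih u (by have := hdir v u hld hu' hu; omega)
        · exact hagree u hu'
      · exact hagree v hld
  funext v; exact key (μ v + 1) v (Nat.lt_succ_self _)

lemma st19_card_le {l r n k c q : ℕ} {Q : Type*} [Fintype Q] (hQ : Fintype.card Q = q)
    (hk : 0 < k) (hn : n = k * c) (C : Finset (Fin n → Q))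
    (hC : IsStorageCode (lineRel l r n) (↑C : Set (Fin n → Q))) (μ : Fin n → ℕ)
    (hdir : ∀ v u : Fin n, k ∣ (v : ℕ) → k ∣ (u : ℕ) → lineRel l r n v u → μ u < μ v) :
    C.card ≤ q ^ (n - c) := by
  classical
  have hcard : C.card ≤ Fintype.card ({i : Fin n // ¬ k ∣ (i : ℕ)} → Q) := by
    rw [← Finset.card_univ]
    apply Finset.card_le_card_of_injOn
      (fun x (i : {i : Fin n // ¬ k ∣ (i : ℕ)}) => x i.1)
      (fun _ _ => Finset.mem_univ _)
    intro x hx y hy hxy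
    exact st19_unique (↑C) hC μ hdir (Finset.mem_coe.mp hx) (Finset.mem_coe.mp hy)
      (fun v hv => congrFun hxy ⟨v, hv⟩)
  rwa [Fintype.card_fun, hQ, Fintype.card_subtype_compl, Fintype.card_fin,
    Fintype.card_subtype, st19_count hk hn] at hcard

def st19_B (n k : ℕ) (v : Fin n) : Finset (Fin n) :=
  Finset.univ.filter (fun u => (u : ℕ) / k = (v : ℕ) / k)

lemma st19_mem_B {n k : ℕ} {v u : Fin n} :
    u ∈ st19_B n k v ↔ (u : ℕ) / k = (v : ℕ) / k := by
  simp [st19_B]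

lemma st19_nonleader {n k : ℕ} {i u : Fin n} (hi : k ∣ (i : ℕ))
    (hu : u ∈ (st19_B n k i).erase i) : ¬ k ∣ (u : ℕ) := by
  obtain ⟨hne, hmem⟩ := Finset.mem_erase.mp hu
  have hblk : (u : ℕ) / k = (i : ℕ) / k := st19_mem_B.mp hmem
  intro hdu
  exact hne (Fin.ext (by rw [← Nat.div_mul_cancel hdu, hblk, Nat.div_mul_cancel hi]))

lemma st19_construct {l r n k c q : ℕ} {Q : Type*} [Fintype Q] (hQ : Fintype.card Q = q)
    (hq : 2 ≤ q) (hkl : k ≤ l + 1) (hkr : k ≤ r + 1) (hk : 0 < k) (hn : n = k * c) :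
    ∃ C : Finset (Fin n → Q), IsStorageCode (lineRel l r n) (↑C : Set (Fin n → Q)) ∧
      q ^ (n - c) ≤ C.card := by
  classical
  haveI : NeZero q := ⟨by omega⟩
  haveI hne : Nonempty Q := Fintype.card_pos_iff.mp (by omega)
  let d : Q ≃ ZMod q := Fintype.equivOfCardEq (by rw [hQ, ZMod.card])
  refine ⟨Finset.univ.filter (fun x : Fin n → Q => ∀ b : Fin c,
      ∑ u ∈ Finset.univ.filter (fun u : Fin n => (u : ℕ) / k = (b : ℕ)), d (x u) = 0),
      ?_, ?_⟩
  · -- storage code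
    intro v
    refine ⟨fun x => d.symm (-∑ u ∈ (st19_B n k v).erase v, d (x u)), ?_, ?_⟩
    · intro x y hxy
      have hcong : ∀ u ∈ (st19_B n k v).erase v, d (x u) = d (y u) := by
        intro u hu
        obtain ⟨hune, humem⟩ := Finset.mem_erase.mp hu
        have hblk := st19_mem_B.mp humem
        rw [hxy u (st19_sameBlock hkl hkr hk (Ne.symm hune) hblk.symm)]
      exact congrArg _ (congrArg _ (Finset.sum_congr rfl hcong))
    · intro x hx
      have hvc : (v : ℕ) / k < c := by
        have h1 : (v : ℕ) < n := v.2
        have h2 := Nat.div_lt_div_of_lt_of_dvd (a := (v : ℕ)) (b := n) (d := k) ⟨c, hn⟩ h1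
        exact lt_of_lt_of_eq h2 (by rw [hn, Nat.mul_div_cancel_left _ hk])
      have hb : ∑ u ∈ Finset.univ.filter (fun u : Fin n => (u : ℕ) / k = (v : ℕ) / k),
          d (x u) = 0 := (Finset.mem_filter.mp hx).2 ⟨(v : ℕ) / k, hvc⟩
      have hvB : v ∈ st19_B n k v := st19_mem_B.mpr rfl
      have hsum := Finset.add_sum_erase (st19_B n k v) (fun u => d (x u)) hvB
      have h2 : -∑ u ∈ (st19_B n k v).erase v, d (x u) = d (x v) :=
        neg_eq_of_add_eq_zero_left (by rw [hsum]; exact hb)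
      show d.symm (-∑ u ∈ (st19_B n k v).erase v, d (x u)) = x v
      rw [h2, Equiv.symm_apply_apply]
  · -- cardinality lower bound
    set junk : Q := Classical.arbitrary Q with hjunk
    set G0 : ({i : Fin n // ¬ k ∣ (i : ℕ)} → Q) → Fin n → Q :=
      fun g i => if h : k ∣ (i : ℕ) then junk else g ⟨i, h⟩ with hG0
    set ext : ({i : Fin n // ¬ k ∣ (i : ℕ)} → Q) → Fin n → Q :=
      fun g i => if h : k ∣ (i : ℕ) then
        d.symm (-∑ u ∈ (st19_B n k i).erase i, d (G0 g u)) else g ⟨i, h⟩ with hext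
    have hextval : ∀ g i (h : k ∣ ((i : Fin n) : ℕ)), ∀ u ∈ (st19_B n k i).erase i,
        ext g u = G0 g u := by
      intro g i h u hu
      have hnl := st19_nonleader h hu
      rw [hext, hG0]
      simp only [dif_neg hnl]
    have hcard : q ^ (n - c) = Fintype.card ({i : Fin n // ¬ k ∣ (i : ℕ)} → Q) := by
      rw [Fintype.card_fun, hQ, Fintype.card_subtype_compl, Fintype.card_fin,
        Fintype.card_subtype, st19_count hk hn]
    rw [hcard, ← Finset.card_univ]
    apply Finset.card_le_card_of_injOn ext
    · -- maps into the code
      intro g _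
      refine Finset.mem_coe.mpr (Finset.mem_filter.mpr ⟨Finset.mem_univ _, fun b => ?_⟩)
      have hLlt : (b : ℕ) * k < n := by
        calc (b : ℕ) * k < c * k := Nat.mul_lt_mul_of_pos_right b.2 hk
        _ = n := by rw [hn, mul_comm]
      set Lv : Fin n := ⟨(b : ℕ) * k, hLlt⟩ with hLv
      have hLd : k ∣ (Lv : ℕ) := Dvd.intro_left _ rfl
      have hLb : (Lv : ℕ) / k = (b : ℕ) := Nat.mul_div_cancel _ hk
      have hfil : (Finset.univ.filter fun u : Fin n => (u : ℕ) / k = (b : ℕ))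
          = st19_B n k Lv := by
        rw [st19_B, hLb]
      rw [hfil, ← Finset.add_sum_erase _ _ (st19_mem_B.mpr rfl)]
      have hsum : ∑ u ∈ (st19_B n k Lv).erase Lv, d (ext g u)
          = ∑ u ∈ (st19_B n k Lv).erase Lv, d (G0 g u) :=
        Finset.sum_congr rfl (fun u hu => by rw [hextval g Lv hLd u hu])
      have he : ext g Lv = d.symm (-∑ u ∈ (st19_B n k Lv).erase Lv, d (G0 g u)) := by
        rw [hext]; simp only [dif_pos hLd]
      rw [hsum, he, Equiv.apply_symm_apply, neg_add_cancel]
    · -- injective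
      intro g1 _ g2 _ h
      funext i
      have := congrFun h i.1
      rw [hext] at this
      simpa only [dif_neg i.2] using this

/-- For `R = {1,…,r} ∪ {−1,…,−l}`, `m = min{l,r}` and `(m+1) ∣ n`, the maximum
cardinality of a storage code on `Z_{R,n}` over an alphabet of size `q` is
`q^{n·m/(m+1)}`, and the multiples of `m+1` form a maximum DAG set. -/
theorem stmt19 (l r : ℕ) (hl : 1 ≤ l) (hr : 1 ≤ r) (n q : ℕ) (hn : 1 ≤ n)
    (hq : 2 ≤ q) (hdvd : (min l r + 1) ∣ n)
    (Q : Type*) [Fintype Q] (hQ : Fintype.card Q = q) :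
    IsGreatest {m : ℕ | ∃ C : Finset (Fin n → Q),
        IsStorageCode (lineRel l r n) (↑C : Set (Fin n → Q)) ∧ C.card = m}
      (q ^ (n * min l r / (min l r + 1))) ∧
    IsDagSet (lineRel l r n)
      (↑(Finset.univ.filter fun i : Fin n => (min l r + 1) ∣ (i : ℕ)) : Set (Fin n)) ∧
    ∀ S : Finset (Fin n), IsDagSet (lineRel l r n) (↑S : Set (Fin n)) →
      S.card ≤ (Finset.univ.filter fun i : Fin n => (min l r + 1) ∣ (i : ℕ)).card := by
  classical
  obtain ⟨c, hcn⟩ := hdvd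
  set m := min l r with hm
  have hk : 0 < m + 1 := Nat.succ_pos m
  have hml : m ≤ l := min_le_left l r
  have hmr : m ≤ r := min_le_right l r
  have hc : 0 < c := by
    rcases Nat.eq_zero_or_pos c with h | h
    · subst h; simp at hcn; omega
    · exact h
  obtain ⟨μ, hdir⟩ : ∃ μ : Fin n → ℕ, ∀ v u : Fin n, (m + 1) ∣ (v : ℕ) →
      (m + 1) ∣ (u : ℕ) → lineRel l r n v u → μ u < μ v := by
    rcases le_total l r with hlr | hrl
    · refine ⟨fun v => n - (v : ℕ), fun v u hv hu hrel => ?_⟩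
      have hml' : m + 1 = l + 1 := by rw [hm, min_eq_left hlr]
      rw [hml'] at hv hu
      have h1 := st19_dirL hlr hv hu hrel
      have h2 : (u : ℕ) < n := u.2
      show n - (u : ℕ) < n - (v : ℕ)
      omega
    · refine ⟨fun v => (v : ℕ), fun v u hv hu hrel => ?_⟩
      have hml' : m + 1 = r + 1 := by rw [hm, min_eq_right hrl]
      rw [hml'] at hv hu
      show (u : ℕ) < (v : ℕ)
      exact st19_dirL hrl hu hv (st19_rel_symm hrel)
  have h1 : n * m / (m + 1) = c * m := by
    rw [hcn, mul_assoc, Nat.mul_div_cancel_left _ hk]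
  have h2 : n - c = c * m := by
    have h3 : n = m * c + c := by rw [hcn]; ring
    have h4 : c * m = m * c := mul_comm c m
    omega
  refine ⟨⟨?_, ?_⟩, ?_, ?_⟩
  · -- membership
    obtain ⟨C, hCs, hCc⟩ := st19_construct hQ hq (by omega : m + 1 ≤ l + 1)
      (by omega : m + 1 ≤ r + 1) hk hcn
    refine ⟨C, hCs, le_antisymm ?_ ?_⟩
    · rw [h1, ← h2]
      exact st19_card_le hQ hk hcn C hCs μ hdir
    · rw [h1, ← h2]
      exact hCc
  · -- upper bound
    rintro N ⟨C, hCs, rfl⟩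
    rw [h1, ← h2]
    exact st19_card_le hQ hk hcn C hCs μ hdir
  · -- DAG set
    rintro ⟨mc, f, hmc, hS, hclose, hstep⟩
    have hld : ∀ i, (m + 1) ∣ ((f i : Fin n) : ℕ) := fun i => by
      have := hS i
      rw [Finset.mem_coe, Finset.mem_filter] at this
      exact this.2
    have hmono := st19_chain (α := ℕᵒᵈ) hmc (fun i => OrderDual.toDual (μ (f i)))
      (fun i => by
        simp only [OrderDual.toDual_lt_toDual]
        exact hdir _ _ (hld _) (hld _) (hstep i))
    simp only [OrderDual.toDual_lt_toDual] at hmono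
    rw [hclose] at hmono
    exact lt_irrefl _ hmono
  · -- maximality
    intro S hSdag
    rw [st19_count hk hcn, ← Finset.card_range c]
    refine Finset.card_le_card_of_injOn (fun i : Fin n => (i : ℕ) / (m + 1)) ?_ ?_
    · intro a _
      rw [Finset.mem_coe, Finset.mem_range]
      have ha1 : (a : ℕ) < n := a.2
      have ha2 := Nat.div_lt_div_of_lt_of_dvd (a := (a : ℕ)) (b := n) (d := m + 1)
        ⟨c, hcn⟩ ha1
      exact lt_of_lt_of_eq ha2 (by rw [hcn, Nat.mul_div_cancel_left _ hk])
    · intro a ha b hb hab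
      by_contra hne
      apply hSdag
      refine ⟨2, ![a, b, a], by omega, ?_, ?_, ?_⟩
      · intro i
        fin_cases i
        · exact ha
        · exact hb
        · exact ha
      · rfl
      · intro i
        fin_cases i
        · show lineRel l r n a b
          exact st19_sameBlock (by omega) (by omega) hk hne hab
        · show lineRel l r n b a
          exact st19_sameBlock (by omega) (by omega) hk (Ne.symm hne) (Eq.symm hab)
end
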